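/- arXiv:2012.15542 — 4 statements merged into one kernel-verified Lean document; each statement's English description precedes it below -/
import Mathlib

section
/- Let (V,E) be a rooted, leafless directed tree and μ a weight, and suppose the backward shift B is bounded on ℓ¹(V,μ). Then B is hypercyclic on ℓ¹(V,μ) if and only if there is an increasing sequence (n_k) of positive integers such that for every v ∈ V, inf_{u ∈ Chi^{n_k}(v)} |μ_u| → 0 as k → ∞; moreover this is equivalent to B being weakly mixing. -/
open scoped ENNReal
open Filter

/-- Iterated parent map of a partially defined parent function. -/
def parIter {V : Type*} (par : V → Option V) : ℕ → V → Option V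
  | 0, v => some v
  | n + 1, v => (par v).bind (parIter par n)

/-- A directed tree: each vertex has at most one parent (the map `par`),
the graph is connected (any two vertices have a common ancestor), and has no cycles. -/
structure DirTree (V : Type*) : Type _ where
  par : V → Option V
  connected : ∀ u v : V, ∃ m n : ℕ, ∃ w : V,
    parIter par m u = some w ∧ parIter par n v = some w
  acyclic : ∀ (v : V) (n : ℕ), parIter par (n + 1) v ≠ some v

namespace DirTree

variable {V : Type*} (t : DirTree V)

/-- The set of children of a vertex. -/
def children (v : V) : Set V := {u | t.par u = some v}

/-- `desc n v` is `Chi^n(v)`, the set of `n`-th generation descendants of `v`. -/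
def desc (n : ℕ) (v : V) : Set V := {u | parIter t.par n u = some v}

def IsRoot (v : V) : Prop := t.par v = none

def Rooted : Prop := ∃ v, t.IsRoot v

def Unrooted : Prop := ∀ v : V, t.par v ≠ none

/-- The tree has no leaves: every vertex has a child. -/
def Leafless : Prop := ∀ v : V, ∃ u, t.par u = some v

variable {𝕂 : Type*} [RCLike 𝕂]

/-- The weighted backward shift `B_λ`: `(B_λ f)(v) = ∑_{u ∈ Chi(v)} λ_u f(u)`. -/
noncomputable def bshift (lam : V → 𝕂) (f : V → 𝕂) : V → 𝕂 :=
  fun v => ∑' u : t.children v, lam u * f u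

/-- The weighted forward shift `S_λ`: `(S_λ f)(v) = λ_v f(par v)` for `v ≠ root`, `0` at the root. -/
noncomputable def fshift (lam : V → 𝕂) (f : V → 𝕂) : V → 𝕂 :=
  fun v => (t.par v).elim 0 (fun w => lam v * f w)

/-- `wprod lam n u = λ(par^n(u) → u)`, the product of the weights along the branch
from `par^n(u)` down to `u`. -/
noncomputable def wprod (lam : V → 𝕂) (n : ℕ) (u : V) : 𝕂 :=
  ∏ k ∈ Finset.range n, ((parIter t.par k u).elim 1 lam)

end DirTree

/-- The `ℓ^p(V,μ)`-norm (with values in `ℝ≥0∞`): for `p = ∞` the weighted sup norm,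
otherwise `(∑_v ‖f(v) μ_v‖^p)^{1/p}`. -/
noncomputable def enormW {V 𝕂 : Type*} [RCLike 𝕂] (μ : V → 𝕂) (p : ℝ≥0∞) (f : V → 𝕂) :
    ℝ≥0∞ :=
  if p = ∞ then ⨆ v, (‖μ v * f v‖₊ : ℝ≥0∞)
  else (∑' v, (‖μ v * f v‖₊ : ℝ≥0∞) ^ p.toReal) ^ (1 / p.toReal)

/-- Membership in `ℓ^p(V,μ)`. -/
def MemWLp {V 𝕂 : Type*} [RCLike 𝕂] (μ : V → 𝕂) (p : ℝ≥0∞) (f : V → 𝕂) : Prop :=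
  enormW μ p f ≠ ∞

/-- Membership in `c₀(V,μ)`: the weighted function vanishes at infinity. -/
def MemC0 {V 𝕂 : Type*} [RCLike 𝕂] (μ : V → 𝕂) (f : V → 𝕂) : Prop :=
  Tendsto (fun v => ‖μ v * f v‖) cofinite (nhds 0)

/-- `T` is a bounded operator with respect to the norm `nrm`. -/
def BoundedOn {V 𝕂 : Type*} [RCLike 𝕂] (T : (V → 𝕂) → (V → 𝕂))
    (nrm : (V → 𝕂) → ℝ≥0∞) : Prop :=
  ∃ C : ℝ≥0∞, C ≠ ∞ ∧ ∀ f, nrm (T f) ≤ C * nrm f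

/-- The operator norm of `T` with respect to the norm `nrm`. -/
noncomputable def opNorm {V 𝕂 : Type*} [RCLike 𝕂] (T : (V → 𝕂) → (V → 𝕂))
    (nrm : (V → 𝕂) → ℝ≥0∞) : ℝ≥0∞ :=
  sInf {C : ℝ≥0∞ | ∀ f, nrm (T f) ≤ C * nrm f}

/-- `T` is hypercyclic on the space `{f | mem f}` with metric induced by `nrm`:
some `f` in the space has dense orbit. -/
def HypercyclicOn {V 𝕂 : Type*} [RCLike 𝕂] (T : (V → 𝕂) → (V → 𝕂))
    (mem : (V → 𝕂) → Prop) (nrm : (V → 𝕂) → ℝ≥0∞) : Prop :=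
  ∃ f, mem f ∧ ∀ g, mem g → ∀ ε : ℝ≥0∞, 0 < ε → ∃ n : ℕ, nrm (T^[n] f - g) < ε

/-- `T` is weakly mixing: `T ⊕ T` is hypercyclic on the product. -/
def WeaklyMixingOn {V 𝕂 : Type*} [RCLike 𝕂] (T : (V → 𝕂) → (V → 𝕂))
    (mem : (V → 𝕂) → Prop) (nrm : (V → 𝕂) → ℝ≥0∞) : Prop :=
  ∃ f₁ f₂, mem f₁ ∧ mem f₂ ∧ ∀ g₁ g₂, mem g₁ → mem g₂ → ∀ ε : ℝ≥0∞, 0 < ε →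
    ∃ n : ℕ, nrm (T^[n] f₁ - g₁) < ε ∧ nrm (T^[n] f₂ - g₂) < ε

/-- `T` is (topologically) mixing on the space `{f | mem f}`. -/
def MixingOn {V 𝕂 : Type*} [RCLike 𝕂] (T : (V → 𝕂) → (V → 𝕂))
    (mem : (V → 𝕂) → Prop) (nrm : (V → 𝕂) → ℝ≥0∞) : Prop :=
  ∀ f g, mem f → mem g → ∀ ε : ℝ≥0∞, 0 < ε →
    ∃ N : ℕ, ∀ n ≥ N, ∃ h, mem h ∧ nrm (h - f) < ε ∧ nrm (T^[n] h - g) < ε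



namespace S12

open scoped ENNReal NNReal
open Filter DirTree

section Generic
variable {V : Type*} {𝕂 : Type*} [RCLike 𝕂]

lemma enorm_tsum_le {ι : Type*} (f : ι → 𝕂) :
    (‖∑' i, f i‖₊ : ℝ≥0∞) ≤ ∑' i, (‖f i‖₊ : ℝ≥0∞) := by
  by_cases h : Summable (fun i => ‖f i‖₊)
  · calc (‖∑' i, f i‖₊ : ℝ≥0∞) ≤ ((∑' i, ‖f i‖₊ : ℝ≥0) : ℝ≥0∞) :=
          ENNReal.coe_le_coe.2 (nnnorm_tsum_le h)
    _ = ∑' i, (‖f i‖₊ : ℝ≥0∞) := ENNReal.coe_tsum h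
  · have : ∑' i, (‖f i‖₊ : ℝ≥0∞) = ∞ := by
      by_contra hne
      exact h (ENNReal.tsum_coe_ne_top_iff_summable.1 hne)
    simp [this]

lemma norm_I_le_one : ‖(RCLike.I : 𝕂)‖ ≤ 1 := by
  by_cases h : (RCLike.I : 𝕂) = 0
  · simp [h]
  · rw [RCLike.norm_I_of_ne_zero h]

lemma parIter_succ' (par : V → Option V) (n : ℕ) (v : V) :
    parIter par (n + 1) v = (parIter par n v).bind par := by
  induction n generalizing v with
  | zero => cases h : par v <;> simp [parIter, h]
  | succ n ih =>
    show (par v).bind (parIter par (n+1)) = _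
    cases h : par v with
    | none => simp [parIter, h]
    | some w =>
      simp only [parIter, h, Option.bind_some]
      exact ih w

lemma parIter_none_mono (par : V → Option V) {m m' : ℕ} (h : m ≤ m') {v : V}
    (hm : parIter par m v = none) : parIter par m' v = none := by
  induction m' with
  | zero => exact (Nat.le_zero.1 h) ▸ hm
  | succ k ih =>
    rcases Nat.lt_or_ge m (k+1) with hlt | hge
    · have := ih (Nat.lt_succ_iff.1 hlt)
      rw [parIter_succ' par k v, this]; rfl
    · exact (Nat.le_antisymm h hge) ▸ hm

lemma exists_parIter_none (t : DirTree V) (hroot : t.Rooted) (u : V) :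
    ∃ d : ℕ, parIter t.par (d + 1) u = none := by
  obtain ⟨r, hr⟩ := hroot
  obtain ⟨m, n, w, h1, h2⟩ := t.connected u r
  have hn0 : n = 0 := by
    cases n with
    | zero => rfl
    | succ k =>
      exfalso
      have : parIter t.par (k+1) r = none := by
        show (t.par r).bind _ = none
        rw [hr]; rfl
      rw [this] at h2; exact nomatch h2
  subst hn0
  have hw : r = w := by
    simpa [parIter] using h2
  subst hw
  refine ⟨m, ?_⟩
  rw [parIter_succ' t.par m u, h1]
  exact hr

end Generic

section Tree

variable {V : Type*} {𝕂 : Type*} [RCLike 𝕂] (t : DirTree V) (μ : V → 𝕂)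

/-- The unweighted backward shift. -/
noncomputable abbrev B : (V → 𝕂) → (V → 𝕂) := t.bshift (fun _ => (1 : 𝕂))

/-- The `ℓ¹(μ)` norm, with values in `ℝ≥0∞`. -/
noncomputable def nrm1 (f : V → 𝕂) : ℝ≥0∞ := ∑' v, (‖μ v * f v‖₊ : ℝ≥0∞)

lemma enormW_one (f : V → 𝕂) : enormW μ 1 f = nrm1 μ f := by
  simp [enormW, nrm1]

lemma memWLp_iff (f : V → 𝕂) : MemWLp μ 1 f ↔ nrm1 μ f ≠ ∞ := by
  rw [MemWLp, enormW_one]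

open Classical in
/-- Kronecker delta function. -/
noncomputable def dlt (u : V) : V → 𝕂 := fun v => if v = u then 1 else 0

lemma bshift_apply (f : V → 𝕂) (v : V) :
    B t f v = ∑' u : t.children v, f u.1 := by
  simp [DirTree.bshift]

lemma bshift_zero : B t (0 : V → 𝕂) = 0 := by
  funext v
  simp [DirTree.bshift]

lemma bshift_dlt (u : V) : B t (dlt u : V → 𝕂) = (t.par u).elim 0 dlt := by
  funext v
  rw [bshift_apply]
  cases h : t.par u with
  | none =>
    have h0 : ∀ x : t.children v, dlt (𝕂 := 𝕂) u x.1 = 0 := by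
      rintro ⟨x, hx⟩
      have : x ≠ u := by
        rintro rfl
        rw [show t.par x = some v from hx] at h; exact nomatch h
      simp [dlt, this]
    rw [tsum_congr h0, tsum_zero]
    rfl
  | some w =>
    by_cases hvw : v = w
    · subst hvw
      have hu : u ∈ t.children v := h
      rw [tsum_eq_single (⟨u, hu⟩ : t.children v)]
      · simp [dlt]
      · rintro ⟨x, hx⟩ hne
        have : x ≠ u := fun hxu => hne (Subtype.ext hxu)
        simp [dlt, this]
    · have h0 : ∀ x : t.children v, dlt (𝕂 := 𝕂) u x.1 = 0 := by
        rintro ⟨x, hx⟩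
        have : x ≠ u := by
          rintro rfl
          rw [show t.par x = some v from hx] at h
          exact hvw (Option.some_inj.1 h)
        simp [dlt, this]
      rw [tsum_congr h0, tsum_zero]
      show (0 : 𝕂) = dlt w v
      simp [dlt, hvw]

lemma iter_zero (n : ℕ) : (B t)^[n] (0 : V → 𝕂) = 0 := by
  induction n with
  | zero => rfl
  | succ n ih => rw [Function.iterate_succ_apply, bshift_zero, ih]

lemma iter_dlt (u : V) (n : ℕ) :
    (B t)^[n] (dlt u : V → 𝕂) = (parIter t.par n u).elim 0 dlt := by
  induction n generalizing u with
  | zero => rfl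
  | succ n ih =>
    rw [Function.iterate_succ_apply, bshift_dlt]
    cases h : t.par u with
    | none =>
      have : parIter t.par (n+1) u = none := by
        show (t.par u).bind _ = none
        rw [h]; rfl
      rw [this]
      simpa using iter_zero t n
    | some w =>
      have : parIter t.par (n+1) u = parIter t.par n w := by
        show (t.par u).bind _ = _
        rw [h]; rfl
      rw [this]
      simpa using ih w

lemma nrm1_pt_le (f : V → 𝕂) (v : V) :
    (‖μ v‖₊ : ℝ≥0∞) * ‖f v‖₊ ≤ nrm1 μ f := by
  rw [← ENNReal.coe_mul, ← nnnorm_mul]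
  exact ENNReal.le_tsum v

lemma nrm1_add_le (f g : V → 𝕂) : nrm1 μ (f + g) ≤ nrm1 μ f + nrm1 μ g := by
  simp only [nrm1]
  rw [← ENNReal.tsum_add]
  refine ENNReal.tsum_le_tsum fun v => ?_
  rw [← ENNReal.coe_add]
  refine ENNReal.coe_le_coe.2 ?_
  simpa [mul_add] using nnnorm_add_le (μ v * f v) (μ v * g v)

lemma nrm1_neg (f : V → 𝕂) : nrm1 μ (-f) = nrm1 μ f := by
  simp [nrm1]

lemma nrm1_sub_le (f g : V → 𝕂) : nrm1 μ (f - g) ≤ nrm1 μ f + nrm1 μ g := by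
  rw [show f - g = f + (-g) by ring]
  exact (nrm1_add_le μ f (-g)).trans (by rw [nrm1_neg])

lemma nrm1_sub_comm (f g : V → 𝕂) : nrm1 μ (f - g) = nrm1 μ (g - f) := by
  rw [show f - g = -(g - f) by ring, nrm1_neg]

lemma nrm1_smul (c : 𝕂) (f : V → 𝕂) : nrm1 μ (c • f) = ‖c‖₊ * nrm1 μ f := by
  have hpt : ∀ v, (‖μ v * (c * f v)‖₊ : ℝ≥0∞) = ‖c‖₊ * ‖μ v * f v‖₊ := fun v => by
    rw [← ENNReal.coe_mul, ← nnnorm_mul]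
    congr 1
    ring
  simp only [nrm1, Pi.smul_apply, smul_eq_mul, hpt, ENNReal.tsum_mul_left]

lemma nrm1_dlt (u : V) : nrm1 μ (dlt u : V → 𝕂) = ‖μ u‖₊ := by
  rw [nrm1, tsum_eq_single u]
  · simp [dlt]
  · intro v hv
    simp [dlt, hv]

lemma nrm1_zero : nrm1 μ (0 : V → 𝕂) = 0 := by simp [nrm1]

lemma nrm1_finsum_le {ι : Type*} (s : Finset ι) (F : ι → V → 𝕂) :
    nrm1 μ (∑ i ∈ s, F i) ≤ ∑ i ∈ s, nrm1 μ (F i) := by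
  classical
  induction s using Finset.induction with
  | empty => simp [nrm1_zero]
  | insert _ _ hni ih =>
    rename_i a s'
    rw [Finset.sum_insert hni, Finset.sum_insert hni]
    exact (nrm1_add_le μ _ _).trans (add_le_add_right ih _)

lemma nrm1_tsum_le (F : ℕ → V → 𝕂) :
    nrm1 μ (fun v => ∑' i, F i v) ≤ ∑' i, nrm1 μ (F i) := by
  rw [nrm1]
  calc ∑' v, (‖μ v * ∑' i, F i v‖₊ : ℝ≥0∞)
      = ∑' v, (‖∑' i, μ v * F i v‖₊ : ℝ≥0∞) := by
        congr 1; funext v; rw [tsum_mul_left]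
    _ ≤ ∑' v, ∑' i, (‖μ v * F i v‖₊ : ℝ≥0∞) :=
        ENNReal.tsum_le_tsum fun v => enorm_tsum_le _
    _ = ∑' i, ∑' v, (‖μ v * F i v‖₊ : ℝ≥0∞) := ENNReal.tsum_comm
    _ = ∑' i, nrm1 μ (F i) := rfl

lemma nrm1_finsupp_ne_top (f : V → 𝕂) (s : Finset V) (hs : ∀ v ∉ s, f v = 0) :
    nrm1 μ f ≠ ∞ := by
  rw [nrm1, tsum_eq_sum (s := s) (fun v hv => by simp [hs v hv])]
  exact (ENNReal.sum_lt_top.2 fun v _ => ENNReal.coe_lt_top).ne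


lemma children_eq_desc_one (v : V) : t.children v = t.desc 1 v := by
  ext u
  show t.par u = some v ↔ parIter t.par 1 u = some v
  cases h : t.par u <;> simp [parIter, h]

section Bounded

variable {C : ℝ≥0∞}

lemma mu_par_le (hCB : ∀ f : V → 𝕂, nrm1 μ (B t f) ≤ C * nrm1 μ f)
    {u w : V} (h : t.par u = some w) : (‖μ w‖₊ : ℝ≥0∞) ≤ C * ‖μ u‖₊ := by
  have h1 : B t (dlt u : V → 𝕂) = dlt w := by rw [bshift_dlt, h]; rfl
  calc (‖μ w‖₊ : ℝ≥0∞) = nrm1 μ (dlt w : V → 𝕂) := (nrm1_dlt μ w).symm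
    _ = nrm1 μ (B t (dlt u : V → 𝕂)) := by rw [h1]
    _ ≤ C * nrm1 μ (dlt u : V → 𝕂) := hCB _
    _ = C * ‖μ u‖₊ := by rw [nrm1_dlt]

lemma mu_desc_le (hCB : ∀ f : V → 𝕂, nrm1 μ (B t f) ≤ C * nrm1 μ f)
    {n : ℕ} {v u : V} (h : u ∈ t.desc n v) :
    (‖μ v‖₊ : ℝ≥0∞) ≤ C ^ n * ‖μ u‖₊ := by
  induction n generalizing u with
  | zero =>
    have : u = v := Option.some_inj.1 h
    subst this; simp
  | succ n ih =>
    have h' : (t.par u).bind (parIter t.par n) = some v := h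
    obtain ⟨w, hw1, hw2⟩ := Option.bind_eq_some_iff.mp h'
    calc (‖μ v‖₊ : ℝ≥0∞) ≤ C ^ n * ‖μ w‖₊ := ih hw2
      _ ≤ C ^ n * (C * ‖μ u‖₊) := mul_le_mul_right (mu_par_le t μ hCB hw1) _
      _ = C ^ (n+1) * ‖μ u‖₊ := by rw [pow_succ]; ring

variable (hμ : ∀ v, μ v ≠ 0) (hCt : C ≠ ∞)
  (hCB : ∀ f : V → 𝕂, nrm1 μ (B t f) ≤ C * nrm1 μ f)

include hμ hCt hCB

omit hCt in
lemma tsum_nnnorm_desc_le (f : V → 𝕂) (n : ℕ) (v : V) :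
    ∑' (u : t.desc n v), (‖f u.1‖₊ : ℝ≥0∞) ≤ C ^ n / ‖μ v‖₊ * nrm1 μ f := by
  have hμv : (‖μ v‖₊ : ℝ≥0∞) ≠ 0 := by
    simpa [ENNReal.coe_ne_zero] using nnnorm_ne_zero_iff.2 (hμ v)
  have key : ∀ u : t.desc n v, (‖f u.1‖₊ : ℝ≥0∞) ≤ C ^ n / ‖μ v‖₊ * ‖μ u.1 * f u.1‖₊ := by
    intro u
    have h1 : (‖μ v‖₊ : ℝ≥0∞) * ‖f u.1‖₊ ≤ C ^ n * ‖μ u.1 * f u.1‖₊ := by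
      calc (‖μ v‖₊ : ℝ≥0∞) * ‖f u.1‖₊ ≤ (C ^ n * ‖μ u.1‖₊) * ‖f u.1‖₊ :=
            mul_le_mul_left (mu_desc_le t μ hCB u.2) _
        _ = C ^ n * ‖μ u.1 * f u.1‖₊ := by
            rw [nnnorm_mul, ENNReal.coe_mul, mul_assoc]
    have h2 : (‖f u.1‖₊ : ℝ≥0∞) ≤ (C ^ n * ‖μ u.1 * f u.1‖₊) / ‖μ v‖₊ :=
      (ENNReal.le_div_iff_mul_le (Or.inl hμv) (Or.inl ENNReal.coe_ne_top)).2
        (by rw [mul_comm]; exact h1)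
    refine h2.trans (le_of_eq ?_)
    rw [div_eq_mul_inv, div_eq_mul_inv, mul_right_comm]
  calc ∑' (u : t.desc n v), (‖f u.1‖₊ : ℝ≥0∞)
      ≤ ∑' (u : t.desc n v), C ^ n / ‖μ v‖₊ * ‖μ u.1 * f u.1‖₊ :=
        ENNReal.tsum_le_tsum key
    _ = C ^ n / ‖μ v‖₊ * ∑' (u : t.desc n v), (‖μ u.1 * f u.1‖₊ : ℝ≥0∞) :=
        ENNReal.tsum_mul_left
    _ ≤ C ^ n / ‖μ v‖₊ * nrm1 μ f := by
        refine mul_le_mul_right ?_ _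
        exact ENNReal.tsum_comp_le_tsum_of_injective Subtype.val_injective
          (fun w => (‖μ w * f w‖₊ : ℝ≥0∞))

lemma summable_desc (f : V → 𝕂) (hf : nrm1 μ f ≠ ∞) (n : ℕ) (v : V) :
    Summable (fun u : t.desc n v => f u.1) := by
  have hμv : (‖μ v‖₊ : ℝ≥0∞) ≠ 0 := by
    simpa [ENNReal.coe_ne_zero] using nnnorm_ne_zero_iff.2 (hμ v)
  apply Summable.of_nnnorm
  rw [← ENNReal.tsum_coe_ne_top_iff_summable]
  refine ne_top_of_le_ne_top ?_ (tsum_nnnorm_desc_le t μ hμ hCB f n v)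
  exact ENNReal.mul_ne_top (ENNReal.div_lt_top (ENNReal.pow_ne_top hCt) hμv).ne hf

omit hμ hCt in
lemma nrm1_iter_le (f : V → 𝕂) (n : ℕ) :
    nrm1 μ ((B t)^[n] f) ≤ C ^ n * nrm1 μ f := by
  induction n with
  | zero => simp
  | succ n ih =>
    rw [Function.iterate_succ_apply']
    calc nrm1 μ (B t ((B t)^[n] f)) ≤ C * nrm1 μ ((B t)^[n] f) := hCB _
      _ ≤ C * (C ^ n * nrm1 μ f) := mul_le_mul_right ih _
      _ = C ^ (n+1) * nrm1 μ f := by rw [pow_succ]; ring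

omit hμ in
lemma nrm1_iter_ne_top (f : V → 𝕂) (hf : nrm1 μ f ≠ ∞) (n : ℕ) :
    nrm1 μ ((B t)^[n] f) ≠ ∞ :=
  ne_top_of_le_ne_top (ENNReal.mul_ne_top (ENNReal.pow_ne_top hCt) hf)
    (nrm1_iter_le t μ hCB f n)

lemma iter_apply (f : V → 𝕂) (hf : nrm1 μ f ≠ ∞) (n : ℕ) (v : V) :
    (B t)^[n] f v = ∑' (u : t.desc n v), f u.1 := by
  induction n generalizing f with
  | zero =>
    symm
    rw [tsum_eq_single (⟨v, rfl⟩ : t.desc 0 v)]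
    · rfl
    · rintro ⟨u, hu⟩ hne
      have hu' : some u = some v := hu
      exact absurd (Subtype.ext (Option.some_inj.1 hu')) hne
  | succ n ih =>
    rw [Function.iterate_succ_apply]
    have hBf : nrm1 μ (B t f) ≠ ∞ :=
      ne_top_of_le_ne_top (ENNReal.mul_ne_top hCt hf) (hCB f)
    rw [ih (B t f) hBf]
    let Fwd : (Σ w : t.desc n v, t.children w.1) → t.desc (n+1) v := fun p =>
      ⟨p.2.1, by
        show (t.par p.2.1).bind (parIter t.par n) = some v
        rw [show t.par p.2.1 = some p.1.1 from p.2.2]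
        exact p.1.2⟩
    have hbij : Function.Bijective Fwd := by
      constructor
      · rintro ⟨⟨w1, hw1⟩, ⟨x1, hx1⟩⟩ ⟨⟨w2, hw2⟩, ⟨x2, hx2⟩⟩ h
        have hx : x1 = x2 := congrArg Subtype.val h
        subst hx
        have hx1' : t.par x1 = some w1 := hx1
        have hx2' : t.par x1 = some w2 := hx2
        have hw : w1 = w2 := Option.some_inj.1 (hx1'.symm.trans hx2')
        subst hw
        rfl
      · rintro ⟨x, hx⟩
        have hx' : (t.par x).bind (parIter t.par n) = some v := hx
        obtain ⟨w, hw1, hw2⟩ := Option.bind_eq_some_iff.mp hx'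
        exact ⟨⟨⟨w, hw2⟩, ⟨x, hw1⟩⟩, Subtype.ext rfl⟩
    let e := Equiv.ofBijective Fwd hbij
    have hsum : Summable (fun p : Σ w : t.desc n v, t.children w.1 => f p.2.1) := by
      have h1 := summable_desc t μ hμ hCt hCB f hf (n+1) v
      exact (e.summable_iff (f := fun u : t.desc (n+1) v => f u.1)).2 h1
    calc ∑' (w : t.desc n v), B t f w.1
        = ∑' (w : t.desc n v), ∑' (x : t.children w.1), f x.1 :=
          tsum_congr fun w => bshift_apply t f w.1
      _ = ∑' (p : Σ w : t.desc n v, t.children w.1), f p.2.1 := (Summable.tsum_sigma hsum).symm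
      _ = ∑' (u : t.desc (n+1) v), f u.1 := e.tsum_eq (fun u : t.desc (n+1) v => f u.1)

omit hCt in
lemma bshift_add' (f g : V → 𝕂) (hf : nrm1 μ f ≠ ∞) (hg : nrm1 μ g ≠ ∞)
    (hCt : C ≠ ∞) : B t (f + g) = B t f + B t g := by
  funext v
  rw [Pi.add_apply, bshift_apply, bshift_apply, bshift_apply]
  have h1 : Summable (fun u : t.children v => f u.1) := by
    rw [children_eq_desc_one]
    exact summable_desc t μ hμ hCt hCB f hf 1 v
  have h2 : Summable (fun u : t.children v => g u.1) := by
    rw [children_eq_desc_one]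
    exact summable_desc t μ hμ hCt hCB g hg 1 v
  exact Summable.tsum_add h1 h2

lemma iter_add (f g : V → 𝕂) (hf : nrm1 μ f ≠ ∞) (hg : nrm1 μ g ≠ ∞) (n : ℕ) :
    (B t)^[n] (f + g) = (B t)^[n] f + (B t)^[n] g := by
  induction n with
  | zero => rfl
  | succ n ih =>
    rw [Function.iterate_succ_apply', Function.iterate_succ_apply',
      Function.iterate_succ_apply', ih]
    exact bshift_add' t μ hμ hCB _ _ (nrm1_iter_ne_top t μ hCt hCB f hf n)
      (nrm1_iter_ne_top t μ hCt hCB g hg n) hCt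

lemma iter_ann (f : V → 𝕂) (hf : nrm1 μ f ≠ ∞) (m : ℕ)
    (h : ∀ u, f u ≠ 0 → parIter t.par m u = none) : (B t)^[m] f = 0 := by
  funext v
  rw [iter_apply t μ hμ hCt hCB f hf m v]
  have h0 : ∀ u : t.desc m v, f u.1 = 0 := by
    rintro ⟨u, hu⟩
    by_contra hne
    have h1 := h u hne
    rw [show parIter t.par m u = some v from hu] at h1
    exact nomatch h1
  rw [tsum_congr (g := fun _ => (0 : 𝕂)) h0, tsum_zero]
  rfl

end Bounded

/-- The countable dense family: rational finitely supported functions. -/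
noncomputable def Phi (p : (V →₀ ℚ) × (V →₀ ℚ)) : V → 𝕂 := fun v =>
  ((p.1 v : ℚ) : 𝕂) + ((p.2 v : ℚ) : 𝕂) * RCLike.I

lemma Phi_zero_of (p : (V →₀ ℚ) × (V →₀ ℚ)) (v : V)
    (h1 : v ∉ p.1.support) (h2 : v ∉ p.2.support) : Phi (𝕂 := 𝕂) p v = 0 := by
  rw [Finsupp.notMem_support_iff] at h1 h2
  simp [Phi, h1, h2]

lemma Phi_mem (p : (V →₀ ℚ) × (V →₀ ℚ)) : nrm1 μ (Phi (𝕂 := 𝕂) p) ≠ ∞ := by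
  classical
  exact nrm1_finsupp_ne_top μ _ (p.1.support ∪ p.2.support) fun v hv => by
    rw [Finset.mem_union, not_or] at hv
    exact Phi_zero_of p v hv.1 hv.2

lemma dense_rat (g : V → 𝕂) (hg : nrm1 μ g ≠ ∞) (ε : ℝ≥0∞) (hε0 : ε ≠ 0)
    (hεt : ε ≠ ∞) :
    ∃ p : (V →₀ ℚ) × (V →₀ ℚ), nrm1 μ (g - Phi p) < ε := by
  classical
  have htail := ENNReal.tendsto_tsum_compl_atTop_zero
    (f := fun v => (‖μ v * g v‖₊ : ℝ≥0∞)) hg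
  obtain ⟨s, hs⟩ := (htail.eventually_lt_const (ENNReal.half_pos hε0)).exists
  set θ : ℝ≥0∞ := ε / 2 / (s.card + 1) with hθdef
  have hcard0 : ((s.card : ℝ≥0∞) + 1) ≠ 0 := (lt_of_lt_of_le one_pos le_add_self).ne' 
  have hcardt : ((s.card : ℝ≥0∞) + 1) ≠ ∞ := by
    simp [ENNReal.add_ne_top]
  have hθ0 : θ ≠ 0 := (ENNReal.div_pos (ENNReal.half_pos hε0).ne' hcardt).ne'
  have hθt : θ ≠ ∞ := by
    have h1 : θ ≤ ε / 2 / 1 := ENNReal.div_le_div_left (by simp) _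
    rw [div_one] at h1
    exact ne_top_of_le_ne_top (ENNReal.div_lt_top hεt (by simp)).ne h1
  have happrox : ∀ v ∈ s, ∃ q r : ℚ,
      (‖μ v * (g v - (((q : ℚ) : 𝕂) + ((r : ℚ) : 𝕂) * RCLike.I))‖₊ : ℝ≥0∞) < θ := by
    intro v _
    set d : ℝ := θ.toReal / (4 * (‖μ v‖ + 1)) with hd
    have hd0 : 0 < d := div_pos (ENNReal.toReal_pos hθ0 hθt) (by positivity)
    obtain ⟨q, hq⟩ := exists_rat_near (RCLike.re (g v) : ℝ) hd0
    obtain ⟨r, hr⟩ := exists_rat_near (RCLike.im (g v) : ℝ) hd0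
    refine ⟨q, r, ?_⟩
    set a : ℝ := RCLike.re (g v) with ha
    set b : ℝ := RCLike.im (g v) with hb
    have hrepr : g v - (((q : ℚ) : 𝕂) + ((r : ℚ) : 𝕂) * RCLike.I)
        = ((a - q : ℝ) : 𝕂) + ((b - r : ℝ) : 𝕂) * RCLike.I := by
      have hz : g v = ((a : ℝ) : 𝕂) + ((b : ℝ) : 𝕂) * RCLike.I := (RCLike.re_add_im (g v)).symm
      rw [hz]
      push_cast
      ring
    have hnorm : ‖g v - (((q : ℚ) : 𝕂) + ((r : ℚ) : 𝕂) * RCLike.I)‖ ≤ 2 * d := by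
      rw [hrepr]
      calc ‖((a - q : ℝ) : 𝕂) + ((b - r : ℝ) : 𝕂) * RCLike.I‖
          ≤ ‖((a - q : ℝ) : 𝕂)‖ + ‖((b - r : ℝ) : 𝕂)‖ * ‖(RCLike.I : 𝕂)‖ := by
            refine (norm_add_le _ _).trans ?_
            rw [norm_mul]
        _ ≤ d + d * 1 := by
            refine add_le_add ?_ ?_
            · rw [RCLike.norm_ofReal]; exact hq.le
            · refine mul_le_mul ?_ norm_I_le_one (norm_nonneg _) hd0.le
              rw [RCLike.norm_ofReal]; exact hr.le
        _ = 2 * d := by ring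
    have h2 : ‖μ v * (g v - (((q : ℚ) : 𝕂) + ((r : ℚ) : 𝕂) * RCLike.I))‖ ≤ ‖μ v‖ * (2 * d) := by
      rw [norm_mul]
      exact mul_le_mul_of_nonneg_left hnorm (norm_nonneg _)
    have h3 : ‖μ v‖ * (2 * d) < θ.toReal := by
      have hT : 0 < θ.toReal := ENNReal.toReal_pos hθ0 hθt
      have hm0 : (0:ℝ) ≤ ‖μ v‖ := norm_nonneg _
      rw [hd]
      rw [show ‖μ v‖ * (2 * (θ.toReal / (4 * (‖μ v‖ + 1))))
        = (2 * ‖μ v‖ * θ.toReal) / (4 * (‖μ v‖ + 1)) by ring]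
      rw [div_lt_iff₀ (by positivity)]
      nlinarith
    calc (‖μ v * (g v - (((q : ℚ) : 𝕂) + ((r : ℚ) : 𝕂) * RCLike.I))‖₊ : ℝ≥0∞)
        = ENNReal.ofReal ‖μ v * (g v - (((q : ℚ) : 𝕂) + ((r : ℚ) : 𝕂) * RCLike.I))‖ :=
          (ofReal_norm _).symm
      _ < θ := (ENNReal.ofReal_lt_iff_lt_toReal (norm_nonneg _) hθt).2
          (lt_of_le_of_lt h2 h3)
  choose! q r hqr using happrox
  let p1 : V →₀ ℚ := Finsupp.onFinset s (fun v => if v ∈ s then q v else 0)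
    (fun v h => by by_contra hv; simp [hv] at h)
  let p2 : V →₀ ℚ := Finsupp.onFinset s (fun v => if v ∈ s then r v else 0)
    (fun v h => by by_contra hv; simp [hv] at h)
  refine ⟨(p1, p2), ?_⟩
  have hΦin : ∀ v ∈ s, Phi (𝕂 := 𝕂) (p1, p2) v = ((q v : ℚ) : 𝕂) + ((r v : ℚ) : 𝕂) * RCLike.I := by
    intro v hv
    simp only [Phi, p1, p2, Finsupp.onFinset_apply, if_pos hv]
  have hΦout : ∀ v, v ∉ s → Phi (𝕂 := 𝕂) (p1, p2) v = 0 := by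
    intro v hv
    simp only [Phi, p1, p2, Finsupp.onFinset_apply, if_neg hv]
    simp
  have hsplit : nrm1 μ (g - Phi (p1, p2))
      = (∑ v ∈ s, (‖μ v * (g v - Phi (p1, p2) v)‖₊ : ℝ≥0∞))
        + ∑' (v : {x : V // x ∉ s}), (‖μ v.1 * (g v.1 - Phi (p1, p2) v.1)‖₊ : ℝ≥0∞) := by
    rw [nrm1, ← Summable.tsum_add_tsum_compl (s := (↑s : Set V)) ENNReal.summable ENNReal.summable]
    congr 1
    exact Finset.tsum_subtype s (fun v => (‖μ v * (g v - Phi (p1, p2) v)‖₊ : ℝ≥0∞))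
  have hhead : ∑ v ∈ s, (‖μ v * (g v - Phi (p1, p2) v)‖₊ : ℝ≥0∞) ≤ ε / 2 := by
    calc ∑ v ∈ s, (‖μ v * (g v - Phi (p1, p2) v)‖₊ : ℝ≥0∞)
        ≤ ∑ _v ∈ s, θ := by
          refine Finset.sum_le_sum fun v hv => ?_
          rw [hΦin v hv]
          exact (hqr v hv).le
      _ = s.card * θ := by rw [Finset.sum_const, nsmul_eq_mul]
      _ ≤ (s.card + 1) * θ := mul_le_mul_left (by simp) _
      _ = ε / 2 := by
          rw [hθdef, ENNReal.mul_div_cancel hcard0 hcardt]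
  have htail2 : ∑' (v : {x : V // x ∉ s}), (‖μ v.1 * (g v.1 - Phi (p1, p2) v.1)‖₊ : ℝ≥0∞) < ε / 2 := by
    refine lt_of_le_of_lt (le_of_eq ?_) hs
    refine tsum_congr fun v => ?_
    rw [hΦout v.1 v.2, sub_zero]
  calc nrm1 μ (g - Phi (p1, p2)) = _ + _ := hsplit
    _ < ε / 2 + ε / 2 := ENNReal.add_lt_add_of_le_of_lt
        (ENNReal.sum_lt_top.2 fun v _ => ENNReal.coe_lt_top).ne hhead htail2
    _ = ε := ENNReal.add_halves ε



lemma bshift_smul (c : 𝕂) (f : V → 𝕂) : B t (c • f) = c • B t f := by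
  funext v
  rw [Pi.smul_apply, bshift_apply, bshift_apply, smul_eq_mul, ← tsum_mul_left]
  exact tsum_congr fun u => by simp

lemma iter_smul (c : 𝕂) (f : V → 𝕂) (n : ℕ) :
    (B t)^[n] (c • f) = c • (B t)^[n] f := by
  induction n with
  | zero => rfl
  | succ n ih =>
    rw [Function.iterate_succ_apply', Function.iterate_succ_apply', ih, bshift_smul]


section Big

variable {C : ℝ≥0∞} (hμ : ∀ v, μ v ≠ 0) (hC2 : 2 ≤ C) (hCt : C ≠ ∞)
  (hCB : ∀ f : V → 𝕂, nrm1 μ (B t f) ≤ C * nrm1 μ f)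

include hμ hC2 hCt hCB

lemma exists_big (f : V → 𝕂) (hf : nrm1 μ f ≠ ∞)
    (hyper : ∀ g : V → 𝕂, nrm1 μ g ≠ ∞ → ∀ ε : ℝ≥0∞, 0 < ε →
      ∃ n : ℕ, nrm1 μ ((B t)^[n] f - g) < ε)
    (F : Finset V) (N : ℕ) (θ : ℝ≥0∞) (hθ : θ ≠ 0) :
    ∃ m : ℕ, N < m ∧ ∀ v ∈ F, (⨅ u : t.desc m v, (‖μ u.1‖₊ : ℝ≥0∞)) < θ := by
  classical
  rcases F.eq_empty_or_nonempty with rfl | hFne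
  · exact ⟨N+1, Nat.lt_succ_self N, fun v hv => absurd hv (by simp)⟩
  have hC1 : (1:ℝ≥0∞) ≤ C := le_trans one_le_two hC2
  have hC0 : C ≠ 0 := fun h => by rw [h] at hC1; simp at hC1
  set b : ℝ≥0∞ := F.inf' hFne (fun v => (‖μ v‖₊ : ℝ≥0∞)) with hbdef
  have hb_le : ∀ v ∈ F, b ≤ (‖μ v‖₊ : ℝ≥0∞) := fun v hv => Finset.inf'_le _ hv
  obtain ⟨vb, hvb, hvbe⟩ := Finset.exists_mem_eq_inf' hFne (fun v => ((‖μ v‖₊ : ℝ≥0∞)))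
  have hb0 : b ≠ 0 := by
    rw [hbdef, hvbe]
    simpa [ENNReal.coe_ne_zero] using nnnorm_ne_zero_iff.2 (hμ vb)
  set θ' : ℝ≥0∞ := min (min θ 1) (b / C ^ (N+1)) with hθ'def
  have hθ'0 : θ' ≠ 0 := by
    refine (lt_min (lt_min ?_ ?_) ?_).ne'
    · exact pos_iff_ne_zero.2 hθ
    · exact one_pos
    · exact ENNReal.div_pos hb0 (ENNReal.pow_ne_top hCt)
  have hθ't : θ' ≠ ∞ :=
    ne_top_of_le_ne_top ENNReal.one_ne_top (le_trans (min_le_left _ _) (min_le_right θ 1))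
  have hdt : (2 * nrm1 μ f + 1) ≠ ∞ := by
    simp [ENNReal.add_ne_top, ENNReal.mul_ne_top, hf]
  obtain ⟨c0, hc0⟩ := ENNReal.exists_nat_gt
    (show (2 * nrm1 μ f + 1) / θ' ≠ ∞ from (ENNReal.div_lt_top hdt hθ'0).ne)
  set c : ℕ := c0 + 1 with hcdef
  have hcge : (2 * nrm1 μ f + 1) / θ' < (c : ℝ≥0∞) :=
    lt_of_lt_of_le hc0 (by exact_mod_cast Nat.le_succ c0)
  have hcne0 : (c : ℝ≥0∞) ≠ 0 := by
    simp [hcdef]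
  have hcnet : (c : ℝ≥0∞) ≠ ∞ := ENNReal.natCast_ne_top c
  have hcd0 : (c : ℝ≥0∞) / 2 ≠ 0 := (ENNReal.div_pos hcne0 ENNReal.ofNat_ne_top).ne'
  have hcdt : (c : ℝ≥0∞) / 2 ≠ ∞ := (ENNReal.div_lt_top hcnet two_ne_zero).ne
  set g : V → 𝕂 := fun w => if w ∈ F then ((c : ℕ) : 𝕂) else 0 with hgdef
  have hgmem : nrm1 μ g ≠ ∞ := nrm1_finsupp_ne_top μ g F (fun v hv => by simp [hgdef, hv])
  have hε0 : (0 : ℝ≥0∞) < b * ((c : ℝ≥0∞) / 2) := ENNReal.mul_pos hb0 hcd0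
  obtain ⟨n, hn⟩ := hyper g hgmem _ hε0
  have key : ∀ v ∈ F, (⨅ u : t.desc n v, (‖μ u.1‖₊ : ℝ≥0∞)) < θ' := by
    intro v hv
    have hμv0 : (‖μ v‖₊ : ℝ≥0∞) ≠ 0 := by
      simpa [ENNReal.coe_ne_zero] using nnnorm_ne_zero_iff.2 (hμ v)
    have hpt : (‖μ v‖₊ : ℝ≥0∞) * ‖(B t)^[n] f v - ((c : ℕ) : 𝕂)‖₊ < b * ((c : ℝ≥0∞) / 2) := by
      have h1 : ((B t)^[n] f - g) v = (B t)^[n] f v - ((c : ℕ) : 𝕂) := by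
        simp [hgdef, hv]
      calc (‖μ v‖₊ : ℝ≥0∞) * ‖(B t)^[n] f v - ((c : ℕ) : 𝕂)‖₊
          = (‖μ v‖₊ : ℝ≥0∞) * ‖((B t)^[n] f - g) v‖₊ := by rw [h1]
        _ ≤ nrm1 μ ((B t)^[n] f - g) := nrm1_pt_le μ _ v
        _ < b * ((c : ℝ≥0∞) / 2) := hn
    have h2 : (‖(B t)^[n] f v - ((c : ℕ) : 𝕂)‖₊ : ℝ≥0∞) < (c : ℝ≥0∞) / 2 := by
      have h3 : (‖μ v‖₊ : ℝ≥0∞) * ‖(B t)^[n] f v - ((c : ℕ) : 𝕂)‖₊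
          < (‖μ v‖₊ : ℝ≥0∞) * ((c : ℝ≥0∞) / 2) :=
        lt_of_lt_of_le hpt (mul_le_mul_left (hb_le v hv) _)
      exact (ENNReal.mul_lt_mul_iff_right hμv0 ENNReal.coe_ne_top).1 h3
    have h4 : (c : ℝ≥0∞) / 2 ≤ (‖(B t)^[n] f v‖₊ : ℝ≥0∞) := by
      have hrepr : ((c : ℕ) : 𝕂) = (B t)^[n] f v - ((B t)^[n] f v - ((c : ℕ) : 𝕂)) := by ring
      have h5 : (c : ℝ≥0∞) ≤ (‖(B t)^[n] f v‖₊ : ℝ≥0∞) + ‖(B t)^[n] f v - ((c : ℕ) : 𝕂)‖₊ := by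
        calc (c : ℝ≥0∞) = (‖((c : ℕ) : 𝕂)‖₊ : ℝ≥0∞) := by simp
          _ ≤ (‖(B t)^[n] f v‖₊ : ℝ≥0∞) + ‖(B t)^[n] f v - ((c : ℕ) : 𝕂)‖₊ := by
              rw [hrepr]
              rw [← ENNReal.coe_add]
              exact ENNReal.coe_le_coe.2 ((nnnorm_sub_le _ _).trans (by rw [← hrepr]))
      have h6 : (c : ℝ≥0∞) ≤ (‖(B t)^[n] f v‖₊ : ℝ≥0∞) + (c : ℝ≥0∞) / 2 :=
        le_trans h5 (add_le_add_right h2.le _)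
      have h7 : (c : ℝ≥0∞) - (c : ℝ≥0∞) / 2 ≤ (‖(B t)^[n] f v‖₊ : ℝ≥0∞) :=
        tsub_le_iff_right.2 h6
      rwa [ENNReal.sub_half hcnet] at h7
    have h8 : (⨅ u : t.desc n v, (‖μ u.1‖₊ : ℝ≥0∞)) * ((c : ℝ≥0∞) / 2) ≤ nrm1 μ f := by
      calc (⨅ u : t.desc n v, (‖μ u.1‖₊ : ℝ≥0∞)) * ((c : ℝ≥0∞) / 2)
          ≤ (⨅ u : t.desc n v, (‖μ u.1‖₊ : ℝ≥0∞)) * ‖(B t)^[n] f v‖₊ :=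
            mul_le_mul_right h4 _
        _ ≤ (⨅ u : t.desc n v, (‖μ u.1‖₊ : ℝ≥0∞)) * ∑' (u : t.desc n v), (‖f u.1‖₊ : ℝ≥0∞) := by
            refine mul_le_mul_right ?_ _
            rw [iter_apply t μ hμ hCt hCB f hf n v]
            exact enorm_tsum_le _
        _ = ∑' (u : t.desc n v), (⨅ u : t.desc n v, (‖μ u.1‖₊ : ℝ≥0∞)) * (‖f u.1‖₊ : ℝ≥0∞) :=
            ENNReal.tsum_mul_left.symm
        _ ≤ ∑' (u : t.desc n v), (‖μ u.1‖₊ : ℝ≥0∞) * ‖f u.1‖₊ :=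
            ENNReal.tsum_le_tsum fun u => mul_le_mul_left (iInf_le _ u) _
        _ = ∑' (u : t.desc n v), (‖μ u.1 * f u.1‖₊ : ℝ≥0∞) :=
            tsum_congr fun u => by rw [← ENNReal.coe_mul, ← nnnorm_mul]
        _ ≤ nrm1 μ f :=
            ENNReal.tsum_comp_le_tsum_of_injective Subtype.val_injective
              (fun w => (‖μ w * f w‖₊ : ℝ≥0∞))
    have h10 : (⨅ u : t.desc n v, (‖μ u.1‖₊ : ℝ≥0∞)) * (c : ℝ≥0∞) ≤ 2 * nrm1 μ f := by
      calc (⨅ u : t.desc n v, (‖μ u.1‖₊ : ℝ≥0∞)) * (c : ℝ≥0∞)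
          = (⨅ u : t.desc n v, (‖μ u.1‖₊ : ℝ≥0∞)) * ((c : ℝ≥0∞) / 2) * 2 := by
            rw [mul_assoc, ENNReal.div_mul_cancel two_ne_zero ENNReal.ofNat_ne_top]
        _ ≤ nrm1 μ f * 2 := mul_le_mul_left h8 _
        _ = 2 * nrm1 μ f := mul_comm _ _
    have h11 : (⨅ u : t.desc n v, (‖μ u.1‖₊ : ℝ≥0∞)) ≤ 2 * nrm1 μ f / c :=
      (ENNReal.le_div_iff_mul_le (Or.inl hcne0) (Or.inl hcnet)).2 h10
    refine lt_of_le_of_lt h11 ?_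
    have h12 : 2 * nrm1 μ f + 1 < (c : ℝ≥0∞) * θ' :=
      (ENNReal.div_lt_iff (Or.inl hθ'0) (Or.inl hθ't)).1 hcge
    have h13 : 2 * nrm1 μ f < θ' * (c : ℝ≥0∞) := by
      rw [mul_comm θ' (c : ℝ≥0∞)]
      exact lt_of_lt_of_le (ENNReal.lt_add_right
        (ENNReal.mul_ne_top ENNReal.ofNat_ne_top hf) one_ne_zero) h12.le
    exact (ENNReal.div_lt_iff (Or.inl hcne0) (Or.inl hcnet)).2 h13
  obtain ⟨v0, hv0⟩ := hFne
  have hNn : N < n := by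
    by_contra hle
    push_neg at hle
    have hlow : b / C ^ n ≤ ⨅ u : t.desc n v0, (‖μ u.1‖₊ : ℝ≥0∞) := by
      refine le_iInf fun u => ?_
      have hd := mu_desc_le t μ hCB u.2
      have : (‖μ v0‖₊ : ℝ≥0∞) / C ^ n ≤ (‖μ u.1‖₊ : ℝ≥0∞) :=
        (ENNReal.div_le_iff_le_mul (Or.inl (pow_ne_zero n hC0))
          (Or.inl (ENNReal.pow_ne_top hCt))).2 (by rw [mul_comm] at hd; exact hd)
      exact le_trans (ENNReal.div_le_div_right (hb_le v0 hv0) _) this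
    have hchain : θ' ≤ b / C ^ n := by
      refine le_trans (min_le_right _ _) (ENNReal.div_le_div_left ?_ b)
      exact pow_le_pow_right₀ hC1 (le_trans hle (Nat.le_succ N))
    exact absurd (lt_of_le_of_lt (le_trans hchain hlow) (key v0 hv0)) (lt_irrefl _)
  exact ⟨n, hNn, fun v hv =>
    lt_of_lt_of_le (key v hv) (le_trans (min_le_left _ _) (min_le_left θ 1))⟩

end Big

section Blocks

variable {C : ℝ≥0∞} (hμ : ∀ v, μ v ≠ 0) (hCt : C ≠ ∞)
  (hCB : ∀ f : V → 𝕂, nrm1 μ (B t f) ≤ C * nrm1 μ f)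

lemma nrm1_smul_dlt_ne_top (c : 𝕂) (u : V) : nrm1 μ (c • dlt u : V → 𝕂) ≠ ∞ := by
  rw [nrm1_smul, nrm1_dlt]
  exact ENNReal.mul_ne_top ENNReal.coe_ne_top ENNReal.coe_ne_top

include hμ hCt hCB

lemma iter_finsum {ι : Type*} (s : Finset ι) (F : ι → V → 𝕂)
    (hF : ∀ i ∈ s, nrm1 μ (F i) ≠ ∞) (k : ℕ) :
    (B t)^[k] (∑ i ∈ s, F i) = ∑ i ∈ s, (B t)^[k] (F i) := by
  classical
  induction s using Finset.induction with
  | empty => simpa using iter_zero t k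
  | insert _ _ hni ih =>
    rename_i a s'
    have hmem1 : nrm1 μ (F a) ≠ ∞ := hF a (Finset.mem_insert_self a s')
    have hmem2 : nrm1 μ (∑ i ∈ s', F i) ≠ ∞ := by
      refine ne_top_of_le_ne_top ?_ (nrm1_finsum_le μ s' F)
      exact (ENNReal.sum_lt_top.2 fun i hi =>
        (hF i (Finset.mem_insert_of_mem hi)).lt_top).ne
    rw [Finset.sum_insert hni, Finset.sum_insert hni,
      iter_add t μ hμ hCt hCB _ _ hmem1 hmem2 k,
      ih (fun i hi => hF i (Finset.mem_insert_of_mem hi))]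

lemma blocksum (G : V → 𝕂) (s : Finset V) (hG : ∀ v ∉ s, G v = 0) (m : ℕ)
    (U : V → V) (hU : ∀ v ∈ s, parIter t.par m (U v) = some v) :
    (B t)^[m] (∑ v ∈ s, G v • dlt (U v) : V → 𝕂) = G ∧
    nrm1 μ (∑ v ∈ s, G v • dlt (U v) : V → 𝕂)
      ≤ ∑ v ∈ s, (‖G v‖₊ : ℝ≥0∞) * ‖μ (U v)‖₊ ∧
    (∀ u, (∑ v ∈ s, G v • dlt (U v) : V → 𝕂) u ≠ 0 → ∃ v ∈ s, u = U v) := by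
  classical
  refine ⟨?_, ?_, ?_⟩
  · rw [iter_finsum t μ hμ hCt hCB s _ (fun i _ => nrm1_smul_dlt_ne_top μ _ _) m]
    have hterm : ∀ v ∈ s, (B t)^[m] (G v • dlt (U v) : V → 𝕂) = G v • dlt v := by
      intro v hv
      rw [iter_smul, iter_dlt, hU v hv]
      rfl
    rw [Finset.sum_congr rfl hterm]
    funext w
    rw [Finset.sum_apply]
    have hterm2 : ∀ v ∈ s, (G v • dlt v : V → 𝕂) w = if v = w then G v else 0 := by
      intro v hv
      by_cases hw : w = v
      · subst hw; simp [dlt]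
      · simp [dlt, hw, Ne.symm hw]
    rw [Finset.sum_congr rfl hterm2, Finset.sum_ite_eq']
    by_cases hw : w ∈ s
    · rw [if_pos hw]
    · rw [if_neg hw, hG w hw]
  · refine (nrm1_finsum_le μ s _).trans ?_
    refine Finset.sum_le_sum fun v _ => ?_
    rw [nrm1_smul, nrm1_dlt]
  · intro u hu
    by_contra hc
    push_neg at hc
    apply hu
    rw [Finset.sum_apply]
    refine Finset.sum_eq_zero fun v hv => ?_
    have : u ≠ U v := hc v hv
    simp [dlt, this]

lemma exists_block (hroot : t.Rooted)
    (n : ℕ → ℕ) (hnmono : StrictMono n)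
    (hcond : ∀ v : V, Tendsto (fun k => ⨅ u : t.desc (n k) v, (‖μ u.1‖₊ : ℝ≥0∞))
      atTop (nhds 0))
    (G₁ G₂ : V → 𝕂) (s₁ s₂ : Finset V)
    (hG₁ : ∀ v ∉ s₁, G₁ v = 0) (hG₂ : ∀ v ∉ s₂, G₂ v = 0)
    (N : ℕ) (δ : ℝ≥0∞) (hδ0 : δ ≠ 0) :
    ∃ (m : ℕ) (h₁ h₂ : V → 𝕂) (Dd : ℕ), N < m ∧
      (∀ u, h₁ u ≠ 0 → parIter t.par (Dd + 1) u = none) ∧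
      (∀ u, h₂ u ≠ 0 → parIter t.par (Dd + 1) u = none) ∧
      (B t)^[m] h₁ = G₁ ∧ (B t)^[m] h₂ = G₂ ∧
      nrm1 μ h₁ ≤ δ ∧ nrm1 μ h₂ ≤ δ := by
  classical
  set M : ℝ≥0∞ := (∑ v ∈ s₁, (‖G₁ v‖₊ : ℝ≥0∞)) + ∑ v ∈ s₂, (‖G₂ v‖₊ : ℝ≥0∞) with hMdef
  have hMt : M ≠ ∞ := by
    refine ENNReal.add_ne_top.2 ⟨?_, ?_⟩ <;>
      exact (ENNReal.sum_lt_top.2 fun v _ => ENNReal.coe_lt_top).ne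
  set δ' : ℝ≥0∞ := δ / (M + 1) with hδ'def
  have hδ'0 : δ' ≠ 0 :=
    (ENNReal.div_pos hδ0 (by simp [ENNReal.add_ne_top, hMt])).ne'
  -- find a good k
  have hev : ∀ᶠ k in atTop, (∀ v ∈ s₁ ∪ s₂,
      (⨅ u : t.desc (n k) v, (‖μ u.1‖₊ : ℝ≥0∞)) < δ') ∧ N < k := by
    refine Filter.Eventually.and ?_ (eventually_gt_atTop N)
    rw [Finset.eventually_all]
    intro v _
    exact (hcond v).eventually_lt_const (pos_iff_ne_zero.2 hδ'0)
  obtain ⟨k, hk⟩ := hev.exists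
  set m : ℕ := n k with hmdef
  have hNm : N < m := lt_of_lt_of_le hk.2 (hnmono.le_apply)
  -- choose witnesses
  have hsmall : ∀ v ∈ s₁ ∪ s₂, ∃ u : V,
      parIter t.par m u = some v ∧ (‖μ u‖₊ : ℝ≥0∞) < δ' := by
    intro v hv
    have h1 := hk.1 v hv
    rw [iInf_lt_iff] at h1
    obtain ⟨⟨u, hu⟩, hlt⟩ := h1
    exact ⟨u, hu, hlt⟩
  choose! U hU1 hU2 using hsmall
  have hU1' : ∀ v ∈ s₁, parIter t.par m (U v) = some v :=
    fun v hv => hU1 v (Finset.mem_union_left _ hv)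
  have hU2' : ∀ v ∈ s₂, parIter t.par m (U v) = some v :=
    fun v hv => hU1 v (Finset.mem_union_right _ hv)
  obtain ⟨hB1, hn1, hs1⟩ := blocksum t μ hμ hCt hCB G₁ s₁ hG₁ m U hU1'
  obtain ⟨hB2, hn2, hs2⟩ := blocksum t μ hμ hCt hCB G₂ s₂ hG₂ m U hU2'
  have hdepex : ∀ v : V, ∃ d : ℕ, parIter t.par (d + 1) (U v) = none :=
    fun v => exists_parIter_none t hroot (U v)
  choose dep hdep using hdepex
  set Dd : ℕ := (s₁ ∪ s₂).sup dep with hDdef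
  have hdepth : ∀ v ∈ s₁ ∪ s₂, parIter t.par (Dd + 1) (U v) = none := by
    intro v hv
    exact parIter_none_mono t.par (Nat.succ_le_succ (Finset.le_sup hv)) (hdep v)
  have hMone0 : (M + 1) ≠ 0 := (lt_of_lt_of_le one_pos le_add_self).ne'
  have hMonet : (M + 1) ≠ ∞ := by simp [ENNReal.add_ne_top, hMt]
  refine ⟨m, ∑ v ∈ s₁, G₁ v • dlt (U v), ∑ v ∈ s₂, G₂ v • dlt (U v), Dd,
    hNm, ?_, ?_, hB1, hB2, ?_, ?_⟩
  · intro u hu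
    obtain ⟨v, hv, rfl⟩ := hs1 u hu
    exact hdepth v (Finset.mem_union_left _ hv)
  · intro u hu
    obtain ⟨v, hv, rfl⟩ := hs2 u hu
    exact hdepth v (Finset.mem_union_right _ hv)
  · refine hn1.trans ?_
    calc ∑ v ∈ s₁, (‖G₁ v‖₊ : ℝ≥0∞) * ‖μ (U v)‖₊
        ≤ ∑ v ∈ s₁, (‖G₁ v‖₊ : ℝ≥0∞) * δ' :=
          Finset.sum_le_sum fun v hv =>
            mul_le_mul_right (hU2 v (Finset.mem_union_left _ hv)).le _
      _ = (∑ v ∈ s₁, (‖G₁ v‖₊ : ℝ≥0∞)) * δ' := (Finset.sum_mul _ _ _).symm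
      _ ≤ (M + 1) * δ' := mul_le_mul_left
          ((self_le_add_right _ _).trans (self_le_add_right M 1)) _
      _ = δ := ENNReal.mul_div_cancel hMone0 hMonet
  · refine hn2.trans ?_
    calc ∑ v ∈ s₂, (‖G₂ v‖₊ : ℝ≥0∞) * ‖μ (U v)‖₊
        ≤ ∑ v ∈ s₂, (‖G₂ v‖₊ : ℝ≥0∞) * δ' :=
          Finset.sum_le_sum fun v hv =>
            mul_le_mul_right (hU2 v (Finset.mem_union_right _ hv)).le _
      _ = (∑ v ∈ s₂, (‖G₂ v‖₊ : ℝ≥0∞)) * δ' := (Finset.sum_mul _ _ _).symm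
      _ ≤ (M + 1) * δ' := mul_le_mul_left
          ((le_add_self).trans (self_le_add_right M 1)) _
      _ = δ := ENNReal.mul_div_cancel hMone0 hMonet

end Blocks

section Directions

variable {C : ℝ≥0∞} (hμ : ∀ v, μ v ≠ 0) (hC2 : 2 ≤ C) (hCt : C ≠ ∞)
  (hCB : ∀ f : V → 𝕂, nrm1 μ (B t f) ≤ C * nrm1 μ f)

include hμ hC2 hCt hCB

lemma hc_to_cond [Countable V] (hroot : t.Rooted)
    (hhc : HypercyclicOn (B t) (MemWLp μ 1) (enormW μ 1)) :
    ∃ n : ℕ → ℕ, StrictMono n ∧ (∀ k, 0 < n k) ∧ ∀ v : V,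
      Filter.Tendsto (fun k => ⨅ u : t.desc (n k) v, (‖μ u.1‖₊ : ℝ≥0∞))
        Filter.atTop (nhds 0) := by
  classical
  obtain ⟨f, hfmem, hf⟩ := hhc
  rw [memWLp_iff] at hfmem
  have hyper : ∀ g : V → 𝕂, nrm1 μ g ≠ ∞ → ∀ ε : ℝ≥0∞, 0 < ε →
      ∃ k : ℕ, nrm1 μ ((B t)^[k] f - g) < ε := by
    intro g hg ε hε
    obtain ⟨k, hk⟩ := hf g ((memWLp_iff μ g).2 hg) ε hε
    exact ⟨k, by rwa [enormW_one] at hk⟩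
  have : Nonempty V := ⟨hroot.choose⟩
  obtain ⟨σ, hσ⟩ := exists_surjective_nat V
  have key : ∀ (N : ℕ) (k : ℕ), ∃ m, N < m ∧ ∀ v ∈ (Finset.range (k+1)).image σ,
      (⨅ u : t.desc m v, (‖μ u.1‖₊ : ℝ≥0∞)) < ((k : ℝ≥0∞) + 1)⁻¹ := by
    intro N k
    refine exists_big t μ hμ hC2 hCt hCB f hfmem hyper _ N _ ?_
    simp [ENNReal.add_ne_top]
  let nseq : ℕ → ℕ := fun k => Nat.rec (Classical.choose (key 0 0))
      (fun k prev => Classical.choose (key prev (k+1))) k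
  have h0 := Classical.choose_spec (key 0 0)
  have hstep : ∀ k, nseq k < nseq (k+1) ∧ ∀ v ∈ (Finset.range ((k+1)+1)).image σ,
      (⨅ u : t.desc (nseq (k+1)) v, (‖μ u.1‖₊ : ℝ≥0∞)) < ((((k+1) : ℕ) : ℝ≥0∞) + 1)⁻¹ :=
    fun k => Classical.choose_spec (key (nseq k) (k+1))
  have hmono : StrictMono nseq := strictMono_nat_of_lt_succ fun k => (hstep k).1
  have hpos : ∀ k, 0 < nseq k := by
    intro k
    exact lt_of_lt_of_le h0.1 (hmono.monotone (Nat.zero_le k))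
  refine ⟨nseq, hmono, hpos, fun v => ?_⟩
  rw [ENNReal.tendsto_nhds_zero]
  intro ε hε
  obtain ⟨i, hi⟩ := hσ v
  obtain ⟨a, ha⟩ := ENNReal.exists_inv_nat_lt hε.ne'
  rw [eventually_atTop]
  refine ⟨max i (a + 1), fun k hk => ?_⟩
  have hik : i ≤ k := le_trans (le_max_left _ _) hk
  have hak : a + 1 ≤ k := le_trans (le_max_right _ _) hk
  have hvmem : v ∈ (Finset.range (k+1)).image σ :=
    Finset.mem_image.2 ⟨i, Finset.mem_range.2 (Nat.lt_succ_of_le hik), hi⟩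
  have hbound : (⨅ u : t.desc (nseq k) v, (‖μ u.1‖₊ : ℝ≥0∞)) < ((k : ℝ≥0∞) + 1)⁻¹ := by
    cases k with
    | zero => exact h0.2 v hvmem
    | succ k' => exact (hstep k').2 v hvmem
  refine le_trans hbound.le ?_
  have h1 : (a : ℝ≥0∞) ≤ (k : ℝ≥0∞) + 1 := by
    calc (a : ℝ≥0∞) ≤ (k : ℝ≥0∞) := by exact_mod_cast le_trans (Nat.le_succ a) hak
      _ ≤ (k : ℝ≥0∞) + 1 := le_self_add
  exact le_trans (ENNReal.inv_le_inv.2 h1) ha.le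

lemma cond_to_wm [Countable V] (hroot : t.Rooted)
    (n : ℕ → ℕ) (hnmono : StrictMono n)
    (hcond : ∀ v : V, Filter.Tendsto (fun k => ⨅ u : t.desc (n k) v, (‖μ u.1‖₊ : ℝ≥0∞))
      Filter.atTop (nhds 0)) :
    WeaklyMixingOn (B t) (MemWLp μ 1) (enormW μ 1) := by
  classical
  have hC1 : (1:ℝ≥0∞) ≤ C := le_trans one_le_two hC2
  have hC0 : C ≠ 0 := fun h => by rw [h] at hC1; simp at hC1
  have hCpow1 : ∀ mp : ℕ, (1:ℝ≥0∞) ≤ C ^ mp := fun mp =>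
    (pow_zero C) ▸ pow_le_pow_right₀ hC1 (Nat.zero_le mp)
  have hdivle : ∀ (x : ℝ≥0∞) (mp : ℕ), x / C ^ mp ≤ x := fun x mp => by
    calc x / C ^ mp ≤ x / 1 := ENNReal.div_le_div_left (hCpow1 mp) x
      _ = x := div_one x
  have hgeo : ∑' (i : ℕ), (2⁻¹ : ℝ≥0∞) ^ i = 2 := by
    rw [ENNReal.tsum_geometric]
    have h12 : (1:ℝ≥0∞) - 2⁻¹ = 2⁻¹ := by
      rw [ENNReal.sub_eq_of_eq_add (by simp) ENNReal.inv_two_add_inv_two.symm]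
    rw [h12, inv_inv]
  have hhalft : ∀ j : ℕ, ((2⁻¹ : ℝ≥0∞) ^ j) ≠ ∞ :=
    fun j => ENNReal.pow_ne_top (by simp)
  obtain ⟨σp, hσp⟩ := exists_surjective_nat (((V →₀ ℚ) × (V →₀ ℚ)) × ((V →₀ ℚ) × (V →₀ ℚ)))
  set π : ℕ → ((V →₀ ℚ) × (V →₀ ℚ)) × ((V →₀ ℚ) × (V →₀ ℚ)) :=
    fun j => σp (Nat.unpair j).1 with hπdef
  have key : ∀ (j mp Dp : ℕ), ∃ st : ℕ × ℕ × (V → 𝕂) × (V → 𝕂),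
      mp < st.1 ∧ Dp < st.1 ∧ Dp ≤ st.2.1 ∧
      (∀ u, st.2.2.1 u ≠ 0 → parIter t.par (st.2.1 + 1) u = none) ∧
      (∀ u, st.2.2.2 u ≠ 0 → parIter t.par (st.2.1 + 1) u = none) ∧
      (B t)^[st.1] st.2.2.1 = Phi (π j).1 ∧
      (B t)^[st.1] st.2.2.2 = Phi (π j).2 ∧
      nrm1 μ st.2.2.1 ≤ 2⁻¹ ^ j / C ^ mp ∧
      nrm1 μ st.2.2.2 ≤ 2⁻¹ ^ j / C ^ mp := by
    intro j mp Dp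
    have hδ0 : (2:ℝ≥0∞)⁻¹ ^ j / C ^ mp ≠ 0 :=
      (ENNReal.div_pos (pow_ne_zero _ (by simp)) (ENNReal.pow_ne_top hCt)).ne'
    obtain ⟨m, h₁, h₂, Dd, hNm, hd1, hd2, hB1, hB2, hn1, hn2⟩ :=
      exists_block t μ hμ hCt hCB hroot n hnmono hcond (Phi (π j).1) (Phi (π j).2)
        ((π j).1.1.support ∪ (π j).1.2.support) ((π j).2.1.support ∪ (π j).2.2.support)
        (fun v hv => Phi_zero_of _ v (fun h => hv (Finset.mem_union_left _ h))
          (fun h => hv (Finset.mem_union_right _ h)))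
        (fun v hv => Phi_zero_of _ v (fun h => hv (Finset.mem_union_left _ h))
          (fun h => hv (Finset.mem_union_right _ h)))
        (max mp Dp) _ hδ0
    refine ⟨(m, max Dd Dp, h₁, h₂), lt_of_le_of_lt (le_max_left _ _) hNm,
      lt_of_le_of_lt (le_max_right _ _) hNm, le_max_right _ _, ?_, ?_, hB1, hB2, hn1, hn2⟩
    · intro u hu
      exact parIter_none_mono t.par (Nat.succ_le_succ (le_max_left _ _)) (hd1 u hu)
    · intro u hu
      exact parIter_none_mono t.par (Nat.succ_le_succ (le_max_left _ _)) (hd2 u hu)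
  set seq : ℕ → ℕ × ℕ × (V → 𝕂) × (V → 𝕂) := fun j =>
    Nat.rec (Classical.choose (key 0 0 0))
      (fun j prev => Classical.choose (key (j+1) prev.1 prev.2.1)) j with hseqdef
  set m : ℕ → ℕ := fun j => (seq j).1 with hmdef
  set D : ℕ → ℕ := fun j => (seq j).2.1 with hDdef
  set h1 : ℕ → V → 𝕂 := fun j => (seq j).2.2.1 with hh1def
  set h2 : ℕ → V → 𝕂 := fun j => (seq j).2.2.2 with hh2def
  have spec0 := Classical.choose_spec (key 0 0 0)
  have hspec : ∀ j, m j < m (j+1) ∧ D j < m (j+1) ∧ D j ≤ D (j+1) ∧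
      (∀ u, h1 (j+1) u ≠ 0 → parIter t.par (D (j+1) + 1) u = none) ∧
      (∀ u, h2 (j+1) u ≠ 0 → parIter t.par (D (j+1) + 1) u = none) ∧
      (B t)^[m (j+1)] (h1 (j+1)) = Phi (π (j+1)).1 ∧
      (B t)^[m (j+1)] (h2 (j+1)) = Phi (π (j+1)).2 ∧
      nrm1 μ (h1 (j+1)) ≤ 2⁻¹ ^ (j+1) / C ^ (m j) ∧
      nrm1 μ (h2 (j+1)) ≤ 2⁻¹ ^ (j+1) / C ^ (m j) :=
    fun j => Classical.choose_spec (key (j+1) (m j) (D j))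
  have hmm : StrictMono m := strictMono_nat_of_lt_succ fun j => (hspec j).1
  have hDmono : Monotone D := monotone_nat_of_le_succ fun j => (hspec j).2.2.1
  have hDm : ∀ i j, i < j → D i < m j := by
    intro i j hij
    obtain ⟨l, rfl⟩ := Nat.exists_eq_add_of_lt hij
    exact lt_of_le_of_lt (hDmono (Nat.le_add_right i l)) (hspec (i+l)).2.1
  have hdep1 : ∀ j u, h1 j u ≠ 0 → parIter t.par (D j + 1) u = none := by
    intro j
    cases j with
    | zero => obtain ⟨_, _, _, hd, _⟩ := spec0; exact hd
    | succ j' => obtain ⟨_, _, _, hd, _⟩ := hspec j'; exact hd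
  have hdep2 : ∀ j u, h2 j u ≠ 0 → parIter t.par (D j + 1) u = none := by
    intro j
    cases j with
    | zero => obtain ⟨_, _, _, _, hd, _⟩ := spec0; exact hd
    | succ j' => obtain ⟨_, _, _, _, hd, _⟩ := hspec j'; exact hd
  have hB1s : ∀ j, (B t)^[m j] (h1 j) = Phi (π j).1 := by
    intro j
    cases j with
    | zero => obtain ⟨_, _, _, _, _, hB, _⟩ := spec0; exact hB
    | succ j' => obtain ⟨_, _, _, _, _, hB, _⟩ := hspec j'; exact hB
  have hB2s : ∀ j, (B t)^[m j] (h2 j) = Phi (π j).2 := by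
    intro j
    cases j with
    | zero => obtain ⟨_, _, _, _, _, _, hB, _⟩ := spec0; exact hB
    | succ j' => obtain ⟨_, _, _, _, _, _, hB, _⟩ := hspec j'; exact hB
  have hball1 : ∀ j, nrm1 μ (h1 j) ≤ 2⁻¹ ^ j := by
    intro j
    cases j with
    | zero =>
      obtain ⟨_, _, _, _, _, _, _, hn, _⟩ := spec0
      exact le_trans (hn.trans (hdivle _ _)) (by simp)
    | succ j' =>
      obtain ⟨_, _, _, _, _, _, _, hn, _⟩ := hspec j'
      exact hn.trans (hdivle _ _)
  have hball2 : ∀ j, nrm1 μ (h2 j) ≤ 2⁻¹ ^ j := by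
    intro j
    cases j with
    | zero =>
      obtain ⟨_, _, _, _, _, _, _, _, hn⟩ := spec0
      exact le_trans (hn.trans (hdivle _ _)) (by simp)
    | succ j' =>
      obtain ⟨_, _, _, _, _, _, _, _, hn⟩ := hspec j'
      exact hn.trans (hdivle _ _)
  have htail1 : ∀ j l, nrm1 μ (h1 (j+1+l)) ≤ 2⁻¹ ^ (j+1+l) / C ^ (m j) := by
    intro j l
    obtain ⟨_, _, _, _, _, _, _, hn, _⟩ := hspec (j+l)
    rw [show j+1+l = (j+l)+1 by ring]
    exact hn.trans (ENNReal.div_le_div_left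
      (pow_le_pow_right₀ hC1 (hmm.monotone (Nat.le_add_right j l))) _)
  have htail2 : ∀ j l, nrm1 μ (h2 (j+1+l)) ≤ 2⁻¹ ^ (j+1+l) / C ^ (m j) := by
    intro j l
    obtain ⟨_, _, _, _, _, _, _, _, hn⟩ := hspec (j+l)
    rw [show j+1+l = (j+l)+1 by ring]
    exact hn.trans (ENNReal.div_le_div_left
      (pow_le_pow_right₀ hC1 (hmm.monotone (Nat.le_add_right j l))) _)
  have hsummpt : ∀ (h : ℕ → V → 𝕂), (∀ j, nrm1 μ (h j) ≤ 2⁻¹ ^ j) →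
      ∀ v, Summable (fun j => h j v) := by
    intro h hb v
    have hμv0 : (‖μ v‖₊ : ℝ≥0∞) ≠ 0 := by
      simpa [ENNReal.coe_ne_zero] using nnnorm_ne_zero_iff.2 (hμ v)
    apply Summable.of_nnnorm
    rw [← ENNReal.tsum_coe_ne_top_iff_summable]
    have hle : ∀ j, (‖h j v‖₊ : ℝ≥0∞) ≤ 2⁻¹ ^ j / ‖μ v‖₊ := by
      intro j
      refine (ENNReal.le_div_iff_mul_le (Or.inl hμv0) (Or.inl ENNReal.coe_ne_top)).2 ?_
      rw [mul_comm]
      exact (nrm1_pt_le μ (h j) v).trans (hb j)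
    refine ne_top_of_le_ne_top ?_ (ENNReal.tsum_le_tsum hle)
    simp only [div_eq_mul_inv]
    rw [ENNReal.tsum_mul_right, hgeo]
    exact ENNReal.mul_ne_top ENNReal.ofNat_ne_top (ENNReal.inv_ne_top.2 hμv0)
  have hmemtot : ∀ (h : ℕ → V → 𝕂), (∀ j, nrm1 μ (h j) ≤ 2⁻¹ ^ j) →
      nrm1 μ (fun v => ∑' j, h j v) ≤ 2 := by
    intro h hb
    refine (nrm1_tsum_le μ h).trans ?_
    exact le_trans (ENNReal.tsum_le_tsum hb) (le_of_eq hgeo)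
  have main : ∀ (h : ℕ → V → 𝕂) (G : ℕ → V → 𝕂),
      (∀ j, nrm1 μ (h j) ≤ 2⁻¹ ^ j) →
      (∀ j l, nrm1 μ (h (j+1+l)) ≤ 2⁻¹ ^ (j+1+l) / C ^ (m j)) →
      (∀ j u, h j u ≠ 0 → parIter t.par (D j + 1) u = none) →
      (∀ j, (B t)^[m j] (h j) = G j) →
      ∀ j, nrm1 μ ((B t)^[m j] (fun v => ∑' i, h i v) - G j) ≤ 2⁻¹ ^ j := by
    intro h G hb htail hdep hBh j
    have hmemj : ∀ i, nrm1 μ (h i) ≠ ∞ :=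
      fun i => ne_top_of_le_ne_top (hhalft i) (hb i)
    set F : V → 𝕂 := fun v => ∑' i, h i v with hF
    set Pj : V → 𝕂 := ∑ i ∈ Finset.range (j+1), h i with hPj
    have hmemPj : nrm1 μ Pj ≠ ∞ := by
      refine ne_top_of_le_ne_top ?_ (nrm1_finsum_le μ _ h)
      exact (ENNReal.sum_lt_top.2 fun i _ => (hmemj i).lt_top).ne
    have hRpt : ∀ v, F v - Pj v = ∑' l, h (l + (j+1)) v := by
      intro v
      have hsm : Summable fun i => h i v := hsummpt h hb v
      have hh := Summable.sum_add_tsum_nat_add (f := fun i => h i v) (j+1) hsm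
      have hPv : Pj v = ∑ i ∈ Finset.range (j+1), h i v := by
        rw [hPj]; exact Finset.sum_apply _ _ _
      show (∑' i, h i v) - Pj v = ∑' l, h (l + (j+1)) v
      rw [← hh, hPv, add_sub_cancel_left]
    have hR : (F - Pj) = fun v => ∑' l, h (l + (j+1)) v := funext fun v => hRpt v
    have hRle : nrm1 μ (F - Pj) ≤ 2⁻¹ ^ j / C ^ (m j) := by
      rw [hR]
      refine (nrm1_tsum_le μ _).trans ?_
      have hterm : ∀ l, nrm1 μ (h (l + (j+1))) ≤ 2⁻¹ ^ (j+1+l) / C ^ (m j) := by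
        intro l
        rw [show l + (j+1) = j+1+l by ring]
        exact htail j l
      refine (ENNReal.tsum_le_tsum hterm).trans (le_of_eq ?_)
      simp only [div_eq_mul_inv]
      rw [ENNReal.tsum_mul_right]
      congr 1
      have hpa : ∀ l, (2⁻¹:ℝ≥0∞) ^ (j+1+l) = 2⁻¹^(j+1) * 2⁻¹^l := fun l => pow_add _ _ _
      rw [tsum_congr hpa, ENNReal.tsum_mul_left, hgeo, pow_succ, mul_assoc,
        ENNReal.inv_mul_cancel two_ne_zero ENNReal.ofNat_ne_top, mul_one]
    have hmemR : nrm1 μ (F - Pj) ≠ ∞ :=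
      ne_top_of_le_ne_top (ENNReal.div_lt_top (hhalft j) (pow_ne_zero _ hC0)).ne hRle
    have hFPR : F = Pj + (F - Pj) := by ring
    have hsplit : (B t)^[m j] F = (B t)^[m j] Pj + (B t)^[m j] (F - Pj) := by
      conv_lhs => rw [hFPR]
      exact iter_add t μ hμ hCt hCB Pj (F - Pj) hmemPj hmemR (m j)
    have hBPj : (B t)^[m j] Pj = G j := by
      rw [hPj, iter_finsum t μ hμ hCt hCB _ h (fun i _ => hmemj i) (m j),
        Finset.sum_range_succ]
      have hz : ∀ i ∈ Finset.range j, (B t)^[m j] (h i) = 0 := by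
        intro i hi
        refine iter_ann t μ hμ hCt hCB (h i) (hmemj i) (m j) ?_
        intro u hu
        refine parIter_none_mono t.par ?_ (hdep i u hu)
        exact Nat.succ_le_of_lt (hDm i j (Finset.mem_range.1 hi))
      rw [Finset.sum_congr rfl hz, Finset.sum_const, smul_zero, zero_add, hBh j]
    calc nrm1 μ ((B t)^[m j] F - G j) = nrm1 μ ((B t)^[m j] (F - Pj)) := by
          rw [hsplit, hBPj]
          congr 1
          ring
      _ ≤ C ^ (m j) * nrm1 μ (F - Pj) := nrm1_iter_le t μ hCB _ _
      _ ≤ C ^ (m j) * (2⁻¹ ^ j / C ^ (m j)) := mul_le_mul_right hRle _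
      _ = 2⁻¹ ^ j := ENNReal.mul_div_cancel (pow_ne_zero _ hC0) (ENNReal.pow_ne_top hCt)
  have hmain1 := main h1 (fun j => Phi (π j).1) hball1 htail1 hdep1 hB1s
  have hmain2 := main h2 (fun j => Phi (π j).2) hball2 htail2 hdep2 hB2s
  have hf1mem : nrm1 μ (fun v => ∑' j, h1 j v) ≠ ∞ :=
    ne_top_of_le_ne_top ENNReal.ofNat_ne_top (hmemtot h1 hball1)
  have hf2mem : nrm1 μ (fun v => ∑' j, h2 j v) ≠ ∞ :=
    ne_top_of_le_ne_top ENNReal.ofNat_ne_top (hmemtot h2 hball2)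
  refine ⟨(fun v => ∑' j, h1 j v), (fun v => ∑' j, h2 j v),
    (memWLp_iff μ _).2 hf1mem, (memWLp_iff μ _).2 hf2mem, ?_⟩
  intro g1 g2 hg1 hg2 ε hε
  rw [memWLp_iff] at hg1 hg2
  set δ : ℝ≥0∞ := min ε 1 with hδdef
  have hδ0 : δ ≠ 0 := (lt_min hε one_pos).ne'
  have hδt : δ ≠ ∞ := ne_top_of_le_ne_top ENNReal.one_ne_top (min_le_right _ _)
  have hδ40 : δ/4 ≠ 0 := (ENNReal.div_pos hδ0 (by norm_num)).ne'
  have hδ4t : δ/4 ≠ ∞ := (ENNReal.div_lt_top hδt (by norm_num)).ne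
  obtain ⟨p1, hp1⟩ := dense_rat μ g1 hg1 (δ/4) hδ40 hδ4t
  obtain ⟨p2, hp2⟩ := dense_rat μ g2 hg2 (δ/4) hδ40 hδ4t
  obtain ⟨i, hi⟩ := hσp (p1, p2)
  obtain ⟨j0, hj0⟩ := ENNReal.exists_inv_two_pow_lt hδ40
  set j : ℕ := Nat.pair i j0 with hjdef
  have hπj : π j = (p1, p2) := by
    rw [hπdef]
    simp only [hjdef, Nat.unpair_pair]
    exact hi
  have hpow : (2⁻¹:ℝ≥0∞) ^ j < δ/4 :=
    lt_of_le_of_lt (pow_le_pow_of_le_one zero_le (ENNReal.inv_le_one.2 one_le_two)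
      (Nat.right_le_pair i j0)) hj0
  have hquarter : δ/4 + δ/4 ≤ ε := by
    have h1 : δ/4 ≤ δ/2 := ENNReal.div_le_div_left (by norm_num) δ
    calc δ/4 + δ/4 ≤ δ/2 + δ/2 := add_le_add h1 h1
      _ = δ := ENNReal.add_halves δ
      _ ≤ ε := min_le_left ε 1
  refine ⟨m j, ?_, ?_⟩
  · rw [enormW_one]
    have hd1 : (B t)^[m j] (fun v => ∑' j, h1 j v) - g1
        = ((B t)^[m j] (fun v => ∑' j, h1 j v) - Phi (π j).1) + (Phi (π j).1 - g1) := by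
      ring
    refine lt_of_lt_of_le ?_ hquarter
    calc nrm1 μ ((B t)^[m j] (fun v => ∑' j, h1 j v) - g1)
        ≤ nrm1 μ ((B t)^[m j] (fun v => ∑' j, h1 j v) - Phi (π j).1)
          + nrm1 μ (Phi (π j).1 - g1) := by
          rw [hd1]; exact nrm1_add_le μ _ _
      _ < δ/4 + δ/4 := by
          refine ENNReal.add_lt_add (lt_of_le_of_lt (hmain1 j) hpow) ?_
          rw [nrm1_sub_comm, hπj]
          exact hp1
  · rw [enormW_one]
    have hd2 : (B t)^[m j] (fun v => ∑' j, h2 j v) - g2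
        = ((B t)^[m j] (fun v => ∑' j, h2 j v) - Phi (π j).2) + (Phi (π j).2 - g2) := by
      ring
    refine lt_of_lt_of_le ?_ hquarter
    calc nrm1 μ ((B t)^[m j] (fun v => ∑' j, h2 j v) - g2)
        ≤ nrm1 μ ((B t)^[m j] (fun v => ∑' j, h2 j v) - Phi (π j).2)
          + nrm1 μ (Phi (π j).2 - g2) := by
          rw [hd2]; exact nrm1_add_le μ _ _
      _ < δ/4 + δ/4 := by
          refine ENNReal.add_lt_add (lt_of_le_of_lt (hmain2 j) hpow) ?_
          rw [nrm1_sub_comm, hπj]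
          exact hp2

end Directions

end Tree

end S12

/-- for a rooted leafless directed tree and the unweighted backward
shift `B` bounded on `ℓ¹(V,μ)`: `B` is hypercyclic iff there is an increasing sequence
`(n_k)` of positive integers with `inf_{u ∈ Chi^{n_k}(v)} |μ_u| → 0` for every `v`;
moreover hypercyclicity is equivalent to weak mixing. -/
theorem stmt12 {V : Type*} [Countable V] {𝕂 : Type*} [RCLike 𝕂] (t : DirTree V)
    (hroot : t.Rooted) (hleafless : t.Leafless)
    (μ : V → 𝕂) (hμ : ∀ v, μ v ≠ 0)
    (hbd : BoundedOn (t.bshift (fun _ => (1 : 𝕂))) (enormW μ 1)) :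
    (HypercyclicOn (t.bshift (fun _ => (1 : 𝕂))) (MemWLp μ 1) (enormW μ 1) ↔
      ∃ n : ℕ → ℕ, StrictMono n ∧ (∀ k, 0 < n k) ∧ ∀ v : V,
        Filter.Tendsto (fun k => ⨅ u : t.desc (n k) v, (‖μ u.1‖₊ : ℝ≥0∞))
          Filter.atTop (nhds 0)) ∧
    (HypercyclicOn (t.bshift (fun _ => (1 : 𝕂))) (MemWLp μ 1) (enormW μ 1) ↔
      WeaklyMixingOn (t.bshift (fun _ => (1 : 𝕂))) (MemWLp μ 1) (enormW μ 1)) := by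
  classical
  obtain ⟨C0, hC0t, hC0B⟩ := hbd
  set C : ℝ≥0∞ := max C0 2 with hCdef
  have hC2 : (2:ℝ≥0∞) ≤ C := le_max_right _ _
  have hCt : C ≠ ⊤ :=
    (max_lt (lt_top_iff_ne_top.2 hC0t) (lt_top_iff_ne_top.2 ENNReal.ofNat_ne_top)).ne
  have hCB : ∀ f : V → 𝕂, S12.nrm1 μ (S12.B t f) ≤ C * S12.nrm1 μ f := by
    intro f
    have h := hC0B f
    rw [S12.enormW_one, S12.enormW_one] at h
    exact h.trans (mul_le_mul_left (le_max_left _ _) _)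
  have wm_to_hc : WeaklyMixingOn (t.bshift (fun _ => (1:𝕂))) (MemWLp μ 1) (enormW μ 1) →
      HypercyclicOn (t.bshift (fun _ => (1:𝕂))) (MemWLp μ 1) (enormW μ 1) := by
    rintro ⟨f₁, f₂, hm1, hm2, hwm⟩
    refine ⟨f₁, hm1, fun g hg ε hε => ?_⟩
    obtain ⟨k, hk1, _⟩ := hwm g g hg hg ε hε
    exact ⟨k, hk1⟩
  have cond_imp_wm : (∃ n : ℕ → ℕ, StrictMono n ∧ (∀ k, 0 < n k) ∧ ∀ v : V,
      Filter.Tendsto (fun k => ⨅ u : t.desc (n k) v, (‖μ u.1‖₊ : ℝ≥0∞))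
        Filter.atTop (nhds 0)) →
      WeaklyMixingOn (t.bshift (fun _ => (1:𝕂))) (MemWLp μ 1) (enormW μ 1) := by
    rintro ⟨n, hmono, _, hcond⟩
    exact S12.cond_to_wm t μ hμ hC2 hCt hCB hroot n hmono hcond
  have hc_imp_cond : HypercyclicOn (t.bshift (fun _ => (1:𝕂))) (MemWLp μ 1) (enormW μ 1) →
      (∃ n : ℕ → ℕ, StrictMono n ∧ (∀ k, 0 < n k) ∧ ∀ v : V,
        Filter.Tendsto (fun k => ⨅ u : t.desc (n k) v, (‖μ u.1‖₊ : ℝ≥0∞))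
          Filter.atTop (nhds 0)) :=
    fun hhc => S12.hc_to_cond t μ hμ hC2 hCt hCB hroot hhc
  exact ⟨⟨hc_imp_cond, fun hcond => wm_to_hc (cond_imp_wm hcond)⟩,
    ⟨fun hhc => cond_imp_wm (hc_imp_cond hhc), wm_to_hc⟩⟩
end

section
/- Let (V,E) be a rooted, leafless directed tree and λ ∈ 𝕂 nonzero. The Rolewicz operator λB is a bounded hypercyclic operator on ℓ¹(V) if and only if |λ| > 1, and in that case it is mixing. -/
open scoped ENNReal
open Filter

namespace Stmt15Aux
open DirTree
variable {V : Type*} {𝕂 : Type*} [RCLike 𝕂]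

/-- The `ℓ¹` norm as an `ℝ≥0∞`-valued sum. -/
noncomputable def NN (f : V → 𝕂) : ℝ≥0∞ := ∑' v, (‖f v‖₊ : ℝ≥0∞)

theorem enormW_one_eq (f : V → 𝕂) : enormW (fun _ => (1:𝕂)) 1 f = NN f := by
  simp [enormW, NN]

theorem memWLp_iff (f : V → 𝕂) : MemWLp (fun _ => (1:𝕂)) 1 f ↔ NN f ≠ ∞ := by
  rw [MemWLp, enormW_one_eq]

theorem enn_nnnorm_tsum_le {ι : Type*} (g : ι → 𝕂) :
    (‖∑' i, g i‖₊ : ℝ≥0∞) ≤ ∑' i, (‖g i‖₊ : ℝ≥0∞) := by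
  by_cases h : ∑' i, (‖g i‖₊ : ℝ≥0∞) = ∞
  · simp [h]
  · have hs : Summable fun i => ‖g i‖₊ := ENNReal.tsum_coe_ne_top_iff_summable.mp h
    rw [← ENNReal.coe_tsum hs]
    exact_mod_cast nnnorm_tsum_le hs

theorem summable_of_nn {ι : Type*} {g : ι → 𝕂} (h : ∑' i, (‖g i‖₊ : ℝ≥0∞) ≠ ∞) : Summable g :=
  Summable.of_nnnorm (ENNReal.tsum_coe_ne_top_iff_summable.mp h)

theorem tsum_fiber_le {V' : Type*} (p : V → Option V') (g : V → ℝ≥0∞) :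
    ∑' (v : V') (u : {u // p u = some v}), g u ≤ ∑' u, g u := by
  rw [← ENNReal.tsum_sigma (fun (v : V') (u : {u // p u = some v}) => g u)]
  exact ENNReal.tsum_comp_le_tsum_of_injective
    (f := fun x : (Σ v : V', {u // p u = some v}) => (x.2 : V))
    (by
      rintro ⟨v, u, hu⟩ ⟨v', u', hu'⟩ h
      dsimp at h
      subst h
      have hv : v = v' := Option.some.inj (hu.symm.trans hu')
      subst hv
      rfl) g

theorem tsum_subtype_le (s : Set V) (g : V → ℝ≥0∞) : ∑' u : s, g u ≤ ∑' u, g u :=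
  ENNReal.tsum_comp_le_tsum_of_injective Subtype.val_injective g

theorem NN_bshift_le (t : DirTree V) (c : 𝕂) (f : V → 𝕂) :
    NN (t.bshift (fun _ => c) f) ≤ (‖c‖₊ : ℝ≥0∞) * NN f := by
  calc NN (t.bshift (fun _ => c) f)
      ≤ ∑' (v : V) (u : t.children v), (‖c * f u‖₊ : ℝ≥0∞) :=
        ENNReal.tsum_le_tsum fun v => enn_nnnorm_tsum_le _
    _ ≤ ∑' u, (‖c * f u‖₊ : ℝ≥0∞) := tsum_fiber_le t.par _
    _ = (‖c‖₊ : ℝ≥0∞) * NN f := by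
        simp only [nnnorm_mul, ENNReal.coe_mul, NN, ENNReal.tsum_mul_left]

theorem NN_iter_le (t : DirTree V) (c : 𝕂) (n : ℕ) (f : V → 𝕂) :
    NN ((t.bshift fun _ => c)^[n] f) ≤ (‖c‖₊ : ℝ≥0∞) ^ n * NN f := by
  induction n with
  | zero => simp
  | succ n ih =>
    rw [Function.iterate_succ_apply']
    calc NN ((t.bshift fun _ => c) ((t.bshift fun _ => c)^[n] f))
        ≤ (‖c‖₊ : ℝ≥0∞) * NN ((t.bshift fun _ => c)^[n] f) := NN_bshift_le t c _
      _ ≤ (‖c‖₊ : ℝ≥0∞) * ((‖c‖₊ : ℝ≥0∞) ^ n * NN f) := mul_le_mul_right ih _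
      _ = (‖c‖₊ : ℝ≥0∞) ^ (n+1) * NN f := by ring

theorem NN_add_le (f g : V → 𝕂) : NN (f + g) ≤ NN f + NN g := by
  rw [NN, NN, NN, ← ENNReal.tsum_add]
  refine ENNReal.tsum_le_tsum fun v => ?_
  simp only [Pi.add_apply]
  exact_mod_cast nnnorm_add_le (f v) (g v)

theorem NN_neg (f : V → 𝕂) : NN (-f) = NN f := by simp [NN]

theorem NN_sub_rev (f g : V → 𝕂) : NN (f - g) = NN (g - f) := by
  rw [← NN_neg (f - g), neg_sub]

theorem NN_le_sub_add (f g : V → 𝕂) : NN f ≤ NN (f - g) + NN g := by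
  calc NN f = NN ((f - g) + g) := by rw [sub_add_cancel]
    _ ≤ _ := NN_add_le _ _

theorem NN_sub_le (f g : V → 𝕂) : NN (f - g) ≤ NN f + NN g := by
  rw [sub_eq_add_neg, ← NN_neg g]
  exact NN_add_le f (-g)

theorem parIter_add (par : V → Option V) (m n : ℕ) (v : V) :
    parIter par (m + n) v = (parIter par m v).bind (parIter par n) := by
  induction m generalizing v with
  | zero => simp [parIter]
  | succ m ih =>
    have h : m + 1 + n = (m + n) + 1 := by omega
    rw [h]
    show (par v).bind (parIter par (m + n)) = ((par v).bind (parIter par m)).bind (parIter par n)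
    cases par v with
    | none => rfl
    | some w => exact ih w

theorem parIter_root (t : DirTree V) {r : V} (hr : t.par r = none) (k : ℕ) :
    parIter t.par (k+1) r = none := by
  show (t.par r).bind (parIter t.par k) = none
  rw [hr]; rfl

theorem exists_depth (t : DirTree V) (hroot : t.Rooted) (u : V) :
    ∃ m, ∀ k, m < k → parIter t.par k u = none := by
  obtain ⟨r, hr⟩ := hroot
  obtain ⟨m, n, w, hm, hn⟩ := t.connected u r
  have hwr : w = r := by
    cases n with
    | zero => exact (Option.some.inj hn).symm
    | succ n => rw [parIter_root t hr] at hn; exact absurd hn (by simp)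
  subst hwr
  refine ⟨m, fun k hk => ?_⟩
  obtain ⟨k', rfl⟩ : ∃ k', k = m + (k' + 1) := ⟨k - m - 1, by omega⟩
  rw [parIter_add, hm]
  exact parIter_root t hr k'

end Stmt15Aux
namespace Stmt15Aux
open DirTree
variable {V : Type*} {𝕂 : Type*} [RCLike 𝕂]

/-- The bijection between pairs (n-th descendant, its child) and (n+1)-st descendants. -/
noncomputable def descSuccEquiv (t : DirTree V) (n : ℕ) (v : V) :
    (Σ u : t.desc n v, t.children (u : V)) ≃ t.desc (n + 1) v :=
  Equiv.ofBijective
    (fun x => ⟨(x.2 : V), by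
      show (t.par (x.2 : V)).bind (parIter t.par n) = some v
      rw [show t.par (x.2 : V) = some (x.1 : V) from x.2.2]
      exact x.1.2⟩)
    (by
      constructor
      · rintro ⟨⟨u, hu⟩, ⟨w, hw⟩⟩ ⟨⟨u', hu'⟩, ⟨w', hw'⟩⟩ h
        have hww : w = w' := congrArg Subtype.val h
        subst hww
        have huu : u = u' := Option.some.inj (hw.symm.trans hw')
        subst huu
        rfl
      · rintro ⟨w, hw⟩
        obtain ⟨u, h1, h2⟩ := Option.bind_eq_some_iff.mp hw
        exact ⟨⟨⟨u, h2⟩, ⟨w, h1⟩⟩, rfl⟩)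

theorem iter_apply (t : DirTree V) (c : 𝕂) {f : V → 𝕂} (hf : NN f ≠ ∞) (n : ℕ) (v : V) :
    (t.bshift fun _ => c)^[n] f v = c ^ n * ∑' u : t.desc n v, f u := by
  induction n generalizing f with
  | zero =>
    simp only [Function.iterate_zero, id, pow_zero, one_mul]
    have hb : v ∈ t.desc 0 v := rfl
    refine (tsum_eq_single (f := fun u : t.desc 0 v => f u) ⟨v, hb⟩ ?_).symm
    rintro ⟨u, hu⟩ h
    have hu' : some u = some v := hu
    exact absurd (Subtype.ext (Option.some.inj hu')) h
  | succ n ih =>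
    rw [Function.iterate_succ_apply]
    have hTf : NN (t.bshift (fun _ => c) f) ≠ ∞ :=
      ne_top_of_le_ne_top (ENNReal.mul_ne_top ENNReal.coe_ne_top hf) (NN_bshift_le t c f)
    rw [ih hTf]
    have hsig : ∑' x : (Σ u : t.desc n v, t.children (u : V)), (‖f (x.2 : V)‖₊ : ℝ≥0∞)
        = ∑' w : t.desc (n+1) v, (‖f (w : V)‖₊ : ℝ≥0∞) :=
      (descSuccEquiv t n v).tsum_eq (fun w : t.desc (n+1) v => (‖f (w : V)‖₊ : ℝ≥0∞))
    have hsum : Summable (fun x : (Σ u : t.desc n v, t.children (u : V)) => f (x.2 : V)) := by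
      apply summable_of_nn
      rw [hsig]
      exact ne_top_of_le_ne_top hf (tsum_subtype_le _ _)
    calc c ^ n * ∑' u : t.desc n v, t.bshift (fun _ => c) f u
        = c ^ n * ∑' (u : t.desc n v) (w : t.children (u : V)), c * f w := rfl
      _ = c ^ n * ∑' (u : t.desc n v), c * ∑' (w : t.children (u : V)), f w := by
          refine congrArg (fun z => c ^ n * z) (tsum_congr fun u => ?_)
          exact tsum_mul_left
      _ = (c ^ n * c) * ∑' (u : t.desc n v) (w : t.children (u : V)), f w := by
          rw [tsum_mul_left]; ring
      _ = c ^ (n+1) * ∑' x : (Σ u : t.desc n v, t.children (u : V)), f (x.2 : V) := by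
          rw [hsum.tsum_sigma, pow_succ]
      _ = c ^ (n+1) * ∑' w : t.desc (n+1) v, f w := by
          rw [← (descSuccEquiv t n v).tsum_eq (fun w : t.desc (n+1) v => f (w : V))]
          rfl

theorem NN_iter_indicator_le (t : DirTree V) (c : 𝕂) {f : V → 𝕂} (hf : NN f ≠ ∞)
    (m : ℕ) (h : ∀ u, f u ≠ 0 → parIter t.par m u = none) :
    (t.bshift fun _ => c)^[m] f = 0 := by
  funext v
  rw [iter_apply t c hf m v]
  have hz : ∀ u : t.desc m v, f u = 0 := by
    rintro ⟨u, hu⟩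
    by_contra h0
    have hu' : parIter t.par m u = some v := hu
    rw [h u h0] at hu'
    exact absurd hu' (by simp)
  have : ∑' u : t.desc m v, f u = 0 := by
    rw [tsum_congr hz, tsum_zero]
  rw [this, mul_zero]
  rfl

end Stmt15Aux
namespace Stmt15Aux
open DirTree
open scoped Classical
variable {V : Type*} {𝕂 : Type*} [RCLike 𝕂]

/-- A one-branch forward shift: supported on the chosen children `σ v`. -/
noncomputable def fsh (t : DirTree V) (σ : V → V) (c : 𝕂) (f : V → 𝕂) : V → 𝕂 :=
  fun u => (t.par u).elim 0 fun w => if σ w = u then c⁻¹ * f w else 0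

theorem bshift_fsh (t : DirTree V) (σ : V → V) (hσ : ∀ v, t.par (σ v) = some v)
    (c : 𝕂) (hc : c ≠ 0) (f : V → 𝕂) :
    t.bshift (fun _ => c) (fsh t σ c f) = f := by
  funext v
  show ∑' u : t.children v, c * fsh t σ c f u = f v
  have hb : σ v ∈ t.children v := hσ v
  rw [tsum_eq_single (f := fun u : t.children v => c * fsh t σ c f u) ⟨σ v, hb⟩ ?_]
  · show c * fsh t σ c f (σ v) = f v
    unfold fsh
    rw [hσ v]
    show c * (if σ v = σ v then c⁻¹ * f v else 0) = f v
    rw [if_pos rfl, ← mul_assoc, mul_inv_cancel₀ hc, one_mul]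
  · rintro ⟨u, hu⟩ h
    have hu' : t.par u = some v := hu
    show c * fsh t σ c f u = 0
    unfold fsh
    rw [hu']
    show c * (if σ v = u then c⁻¹ * f v else 0) = 0
    rw [if_neg (show ¬ σ v = u from fun he => h (Subtype.ext he.symm)), mul_zero]

theorem NN_fsh_le (t : DirTree V) (σ : V → V) (c : 𝕂) (hc : c ≠ 0) (f : V → 𝕂) :
    NN (fsh t σ c f) ≤ (‖c‖₊ : ℝ≥0∞)⁻¹ * NN f := by
  set G : V → V → ℝ≥0∞ := fun w u => if σ w = u then (‖c⁻¹ * f w‖₊ : ℝ≥0∞) else 0 with hG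
  have claim1 : ∀ u, (‖fsh t σ c f u‖₊ : ℝ≥0∞) ≤ ∑' w, G w u := by
    intro u
    rcases hpu : t.par u with _ | w
    · have : fsh t σ c f u = 0 := by unfold fsh; rw [hpu]; rfl
      simp [this]
    · have h2 : fsh t σ c f u = if σ w = u then c⁻¹ * f w else 0 := by unfold fsh; rw [hpu]; rfl
      rw [h2]
      by_cases h : σ w = u
      · rw [if_pos h]
        have h3 : (‖c⁻¹ * f w‖₊ : ℝ≥0∞) = G w u := by simp only [hG]; rw [if_pos h]
        rw [h3]
        exact ENNReal.le_tsum w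
      · rw [if_neg h]; simp
  have claim2 : ∀ w, ∑' u, G w u = (‖c⁻¹ * f w‖₊ : ℝ≥0∞) := by
    intro w
    have h1 : ∀ u, u ≠ σ w → G w u = 0 := by
      intro u h
      simp only [hG]
      rw [if_neg (show ¬ σ w = u from fun he => h he.symm)]
    rw [tsum_eq_single (σ w) h1]
    simp only [hG]
    simp
  calc NN (fsh t σ c f) ≤ ∑' u, ∑' w, G w u := ENNReal.tsum_le_tsum claim1
    _ = ∑' w, ∑' u, G w u := ENNReal.tsum_comm
    _ = ∑' w, (‖c⁻¹ * f w‖₊ : ℝ≥0∞) := tsum_congr claim2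
    _ = (‖c‖₊ : ℝ≥0∞)⁻¹ * NN f := by
        have h4 : ∀ w, (‖c⁻¹ * f w‖₊ : ℝ≥0∞) = (‖c‖₊ : ℝ≥0∞)⁻¹ * (‖f w‖₊ : ℝ≥0∞) := fun w => by
          rw [nnnorm_mul, nnnorm_inv, ENNReal.coe_mul,
            ENNReal.coe_inv (nnnorm_ne_zero_iff.mpr hc)]
        rw [tsum_congr h4, NN, ENNReal.tsum_mul_left]

theorem bshift_fsh_iter (t : DirTree V) (σ : V → V) (hσ : ∀ v, t.par (σ v) = some v)
    (c : 𝕂) (hc : c ≠ 0) (m : ℕ) (f : V → 𝕂) :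
    (t.bshift fun _ => c)^[m] ((fsh t σ c)^[m] f) = f := by
  induction m generalizing f with
  | zero => rfl
  | succ m ih =>
    rw [Function.iterate_succ_apply' (fsh t σ c), Function.iterate_succ_apply (t.bshift fun _ => c),
      bshift_fsh t σ hσ c hc]
    exact ih f

theorem NN_fsh_iter_le (t : DirTree V) (σ : V → V) (c : 𝕂) (hc : c ≠ 0) (m : ℕ) (f : V → 𝕂) :
    NN ((fsh t σ c)^[m] f) ≤ ((‖c‖₊ : ℝ≥0∞)⁻¹) ^ m * NN f := by
  induction m with
  | zero => simp
  | succ m ih =>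
    rw [Function.iterate_succ_apply']
    calc NN (fsh t σ c ((fsh t σ c)^[m] f))
        ≤ (‖c‖₊ : ℝ≥0∞)⁻¹ * NN ((fsh t σ c)^[m] f) := NN_fsh_le t σ c hc _
      _ ≤ (‖c‖₊ : ℝ≥0∞)⁻¹ * (((‖c‖₊ : ℝ≥0∞)⁻¹) ^ m * NN f) := mul_le_mul_right ih _
      _ = ((‖c‖₊ : ℝ≥0∞)⁻¹) ^ (m+1) * NN f := by ring

theorem children_summable (t : DirTree V) (c : 𝕂) {f : V → 𝕂} (hf : NN f ≠ ∞) (v : V) :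
    Summable (fun u : t.children v => c * f u) := by
  apply summable_of_nn
  have hle : ∑' u : t.children v, (‖c * f u‖₊ : ℝ≥0∞) ≤ (‖c‖₊ : ℝ≥0∞) * NN f := by
    calc ∑' u : t.children v, (‖c * f u‖₊ : ℝ≥0∞) ≤ ∑' u, (‖c * f u‖₊ : ℝ≥0∞) :=
          tsum_subtype_le _ _
      _ = (‖c‖₊ : ℝ≥0∞) * NN f := by
          simp only [nnnorm_mul, ENNReal.coe_mul, NN, ENNReal.tsum_mul_left]
  exact ne_top_of_le_ne_top (ENNReal.mul_ne_top ENNReal.coe_ne_top hf) hle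

theorem bshift_add (t : DirTree V) (c : 𝕂) {f g : V → 𝕂} (hf : NN f ≠ ∞) (hg : NN g ≠ ∞) :
    t.bshift (fun _ => c) (f + g) = t.bshift (fun _ => c) f + t.bshift (fun _ => c) g := by
  funext v
  show ∑' u : t.children v, c * (f + g) u
      = (∑' u : t.children v, c * f u) + ∑' u : t.children v, c * g u
  rw [← Summable.tsum_add (children_summable t c hf v) (children_summable t c hg v)]
  exact tsum_congr fun u => by simp [mul_add]

theorem iter_add (t : DirTree V) (c : 𝕂) (m : ℕ) {f g : V → 𝕂}
    (hf : NN f ≠ ∞) (hg : NN g ≠ ∞) :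
    (t.bshift fun _ => c)^[m] (f + g)
      = (t.bshift fun _ => c)^[m] f + (t.bshift fun _ => c)^[m] g := by
  induction m with
  | zero => rfl
  | succ m ih =>
    rw [Function.iterate_succ_apply', Function.iterate_succ_apply',
      Function.iterate_succ_apply', ih]
    exact bshift_add t c
      (ne_top_of_le_ne_top (ENNReal.mul_ne_top (ENNReal.pow_ne_top ENNReal.coe_ne_top) hf)
        (NN_iter_le t c m f))
      (ne_top_of_le_ne_top (ENNReal.mul_ne_top (ENNReal.pow_ne_top ENNReal.coe_ne_top) hg)
        (NN_iter_le t c m g))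

end Stmt15Aux
namespace Stmt15Aux
open DirTree
open scoped Classical
variable {V : Type*} {𝕂 : Type*} [RCLike 𝕂]

theorem NN_ptsum_le (F : ℕ → V → 𝕂) : NN (fun v => ∑' j, F j v) ≤ ∑' j, NN (F j) := by
  calc NN (fun v => ∑' j, F j v)
      ≤ ∑' (v : V) (j : ℕ), (‖F j v‖₊ : ℝ≥0∞) := ENNReal.tsum_le_tsum fun v => enn_nnnorm_tsum_le _
    _ = ∑' (j : ℕ) (v : V), (‖F j v‖₊ : ℝ≥0∞) := ENNReal.tsum_comm
    _ = ∑' j, NN (F j) := rfl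

theorem NN_single_le (F : ℕ → V → 𝕂) (j : ℕ) : NN (F j) ≤ ∑' i, NN (F i) := ENNReal.le_tsum j

theorem nn_apply_le (f : V → 𝕂) (v : V) : (‖f v‖₊ : ℝ≥0∞) ≤ NN f := ENNReal.le_tsum v

theorem iter_tsum (t : DirTree V) (c : 𝕂) (F : ℕ → V → 𝕂) (hB : ∑' j, NN (F j) ≠ ∞)
    (m : ℕ) (v : V) :
    (t.bshift fun _ => c)^[m] (fun v => ∑' j, F j v) v
      = ∑' j, (t.bshift fun _ => c)^[m] (F j) v := by
  have hNF : ∀ j, NN (F j) ≠ ∞ := fun j => ne_top_of_le_ne_top hB (NN_single_le F j)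
  have hNf : NN (fun v => ∑' j, F j v) ≠ ∞ := ne_top_of_le_ne_top hB (NN_ptsum_le F)
  rw [iter_apply t c hNf m v]
  have hswap : ∑' (u : t.desc m v) (j : ℕ), F j u = ∑' (j : ℕ) (u : t.desc m v), F j u := by
    refine Summable.tsum_comm' ?_ ?_ ?_
    · -- Summable uncurried on ℕ × (desc m v)
      apply summable_of_nn
      have hpr : ∑' (p : ℕ × ↑(t.desc m v)), (‖F p.1 (p.2 : V)‖₊ : ℝ≥0∞)
          = ∑' (j : ℕ) (u : t.desc m v), (‖F j (u : V)‖₊ : ℝ≥0∞) :=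
        ENNReal.tsum_prod (f := fun (j : ℕ) (u : ↑(t.desc m v)) => (‖F j (u : V)‖₊ : ℝ≥0∞))
      rw [show (fun p : ℕ × ↑(t.desc m v) =>
            (‖Function.uncurry (fun (j : ℕ) (u : t.desc m v) => F j u) p‖₊ : ℝ≥0∞))
          = fun p : ℕ × ↑(t.desc m v) => (‖F p.1 (p.2 : V)‖₊ : ℝ≥0∞) from rfl, hpr]
      refine ne_top_of_le_ne_top hB (ENNReal.tsum_le_tsum fun j => ?_)
      exact tsum_subtype_le _ _
    · intro j
      apply summable_of_nn
      exact ne_top_of_le_ne_top (hNF j) (tsum_subtype_le _ _)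
    · intro u
      apply summable_of_nn
      refine ne_top_of_le_ne_top hB (ENNReal.tsum_le_tsum fun j => ?_)
      exact nn_apply_le (F j) u
  calc c ^ m * ∑' (u : t.desc m v), ∑' j, F j u
      = c ^ m * ∑' (j : ℕ) (u : t.desc m v), F j u := by rw [hswap]
    _ = ∑' (j : ℕ), c ^ m * ∑' (u : t.desc m v), F j u := tsum_mul_left.symm
    _ = ∑' j, (t.bshift fun _ => c)^[m] (F j) v := by
        refine tsum_congr fun j => ?_
        rw [iter_apply t c (hNF j) m v]

theorem ptsum_split (F : ℕ → V → 𝕂) (hB : ∑' j, NN (F j) ≠ ∞) (j₀ : ℕ) (v : V) :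
    (∑' j, F j v) - F j₀ v = ∑' j, (if j = j₀ then 0 else F j v) := by
  have hs : Summable (fun j => F j v) := summable_of_nn
    (ne_top_of_le_ne_top hB (ENNReal.tsum_le_tsum fun j => nn_apply_le (F j) v))
  have hs2 : Summable (fun j => if j = j₀ then F j₀ v else 0) :=
    summable_of_ne_finset_zero (s := {j₀}) (fun j hj => if_neg (by simpa using hj))
  have hs1 : Summable (fun j => if j = j₀ then 0 else F j v) := by
    have he : (fun j => if j = j₀ then 0 else F j v)
        = fun j => F j v - (if j = j₀ then F j₀ v else 0) := by
      funext j
      by_cases h : j = j₀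
      · subst h; simp
      · simp [h]
    rw [he]
    exact hs.sub hs2
  have key : ∀ j, F j v = (if j = j₀ then 0 else F j v) + (if j = j₀ then F j₀ v else 0) := by
    intro j
    by_cases h : j = j₀
    · subst h; simp
    · simp [h]
  have hsingle : ∑' j, (if j = j₀ then F j₀ v else 0) = F j₀ v := by
    rw [tsum_eq_single j₀ (fun j hj => if_neg hj)]
    simp
  calc (∑' j, F j v) - F j₀ v
      = (∑' j, ((if j = j₀ then 0 else F j v) + (if j = j₀ then F j₀ v else 0))) - F j₀ v := by
        rw [tsum_congr key]
    _ = ((∑' j, (if j = j₀ then 0 else F j v)) + F j₀ v) - F j₀ v := by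
        rw [Summable.tsum_add hs1 hs2, hsingle]
    _ = ∑' j, (if j = j₀ then 0 else F j v) := add_sub_cancel_right _ _

theorem NN_tsum_sub (F : ℕ → V → 𝕂) (hB : ∑' j, NN (F j) ≠ ∞) (j₀ : ℕ) :
    NN ((fun v => ∑' j, F j v) - F j₀) ≤ ∑' j, (if j = j₀ then 0 else NN (F j)) := by
  have he : ((fun v => ∑' j, F j v) - F j₀)
      = fun v => ∑' j, (fun i => if i = j₀ then 0 else F i) j v := by
    funext v
    have := ptsum_split F hB j₀ v
    simp only [Pi.sub_apply]
    rw [this]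
    refine tsum_congr fun j => ?_
    by_cases h : j = j₀ <;> simp [h]
  rw [he]
  refine le_trans (NN_ptsum_le _) (le_of_eq (tsum_congr fun j => ?_))
  by_cases h : j = j₀ <;> simp [h, NN]

theorem geom_tail : ∑' (i : ℕ), ((2 : ℝ≥0∞)⁻¹) ^ (i + 2) = 2⁻¹ := by
  have h1 : ∀ i : ℕ, ((2 : ℝ≥0∞)⁻¹) ^ (i + 2) = ((2:ℝ≥0∞)⁻¹) ^ i * (2⁻¹ * 2⁻¹) := by
    intro i; rw [pow_add]; ring
  rw [tsum_congr h1, ENNReal.tsum_mul_right, ENNReal.tsum_geometric, ENNReal.one_sub_inv_two]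
  rw [← mul_assoc]
  rw [show ((2:ℝ≥0∞)⁻¹)⁻¹ = 2 from inv_inv 2]
  rw [ENNReal.mul_inv_cancel (by norm_num) (by norm_num), one_mul]

theorem exists_pow_mul_le {r : ℝ≥0∞} (hr : r < 1) {x : ℝ≥0∞} (hx : x ≠ ∞)
    {γ : ℝ≥0∞} (hγ : 0 < γ) : ∃ K, ∀ k ≥ K, r ^ k * x ≤ γ := by
  have ht : Filter.Tendsto (fun k : ℕ => r ^ k * x) Filter.atTop (nhds (0 * x)) :=
    ENNReal.Tendsto.mul_const (ENNReal.tendsto_pow_atTop_nhds_zero_of_lt_one hr) (Or.inr hx)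
  rw [zero_mul] at ht
  have := (ht.eventually_lt_const hγ)
  obtain ⟨K, hK⟩ := Filter.eventually_atTop.mp this
  exact ⟨K, fun k hk => (hK k hk).le⟩

end Stmt15Aux
namespace Stmt15Aux
open DirTree
open scoped Classical

theorem exists_enum (V : Type*) [Countable V] (𝕂 : Type*) [RCLike 𝕂] :
    ∃ e : ℕ → (V → 𝕂), (∀ k, ∃ s : Finset V, ∀ v ∉ s, e k v = 0) ∧
      (∀ g : V → 𝕂, NN g ≠ ∞ → ∀ δ : ℝ≥0∞, 0 < δ → ∃ k, NN (g - e k) < δ) := by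
  obtain ⟨D, hDc, hDd⟩ := TopologicalSpace.exists_countable_dense 𝕂
  let D' : Set 𝕂 := insert 0 D
  have hD'c : D'.Countable := hDc.insert 0
  haveI : Countable D' := hD'c.to_subtype
  letI : Zero D' := ⟨⟨0, Set.mem_insert 0 D⟩⟩
  let Φ : (V →₀ D') → (V → 𝕂) := fun p v => ((p v : D') : 𝕂)
  have hne : (Set.range Φ).Nonempty := ⟨Φ 0, Set.mem_range_self 0⟩
  obtain ⟨e, he⟩ := (Set.countable_range Φ).exists_eq_range hne
  refine ⟨e, ?_, ?_⟩
  · intro k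
    have hmem : e k ∈ Set.range Φ := he ▸ Set.mem_range_self k
    obtain ⟨p, hp⟩ := hmem
    refine ⟨p.support, fun v hv => ?_⟩
    rw [← hp]
    show ((p v : D') : 𝕂) = 0
    rw [Finsupp.notMem_support_iff.mp hv]
    rfl
  · intro g hg δ hδ
    suffices h : ∃ qq ∈ Set.range Φ, NN (g - qq) < δ by
      obtain ⟨qq, hqr, hql⟩ := h
      rw [he] at hqr
      obtain ⟨k, rfl⟩ := hqr
      exact ⟨k, hql⟩
    set δ' := min δ 1 with hδ'
    have hδ'pos : 0 < δ' := lt_min hδ zero_lt_one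
    have hδ'top : δ' ≠ ∞ := ne_top_of_le_ne_top ENNReal.one_ne_top (min_le_right _ _)
    have hhalf : 0 < δ' / 2 := ENNReal.div_pos hδ'pos.ne' ENNReal.ofNat_ne_top
    have hhalftop : δ' / 2 ≠ ∞ :=
      (ENNReal.div_lt_top hδ'top (by norm_num)).ne
    have htail := ENNReal.tendsto_tsum_compl_atTop_zero (f := fun v => (‖g v‖₊ : ℝ≥0∞)) hg
    obtain ⟨A, hA⟩ := Filter.eventually_atTop.mp (htail.eventually_lt_const hhalf)
    have hAtail : ∑' (x : {v // v ∉ A}), (‖g (x : V)‖₊ : ℝ≥0∞) < δ' / 2 := hA A le_rfl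
    set η : ℝ≥0∞ := δ' / 2 / ((A.card : ℝ≥0∞) + 1) with hη
    have hηpos : 0 < η := ENNReal.div_pos hhalf.ne' (by simp)
    have hηtop : η ≠ ∞ := (ENNReal.div_lt_top hhalftop (by simp)).ne
    have hηr : 0 < η.toReal := ENNReal.toReal_pos hηpos.ne' hηtop
    have happrox : ∀ x : 𝕂, ∃ qv : D', ‖x - (qv : 𝕂)‖ < η.toReal := by
      intro x
      obtain ⟨y, hy⟩ := Metric.dense_iff.mp hDd x η.toReal hηr
      refine ⟨⟨y, Set.mem_insert_of_mem 0 hy.2⟩, ?_⟩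
      rw [← dist_eq_norm, dist_comm]
      exact Metric.mem_ball.mp hy.1
    choose q hq using happrox
    set p : V →₀ D' := Finsupp.onFinset A (fun v => if v ∈ A then q (g v) else 0)
      (fun v hv => by by_contra h; exact hv (if_neg h)) with hp
    refine ⟨Φ p, Set.mem_range_self p, ?_⟩
    have hΦp : ∀ v, Φ p v = if v ∈ A then (q (g v) : 𝕂) else 0 := by
      intro v
      show ((p v : D') : 𝕂) = _
      rw [hp]
      by_cases h : v ∈ A
      · rw [Finsupp.onFinset_apply, if_pos h, if_pos h]
      · rw [Finsupp.onFinset_apply, if_neg h, if_neg h]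
        rfl
    have hsplit : g - Φ p = (fun v => if v ∈ A then g v - (q (g v) : 𝕂) else 0)
        + fun v => if v ∈ A then 0 else g v := by
      funext v
      simp only [Pi.sub_apply, Pi.add_apply]
      rw [hΦp v]
      by_cases h : v ∈ A
      · simp only [if_pos h]; ring
      · simp only [if_neg h]; ring
    rw [hsplit]
    have h1 : NN (fun v => if v ∈ A then g v - (q (g v) : 𝕂) else 0) ≤ δ' / 2 := by
      have hz : ∀ v ∉ A, (‖(if v ∈ A then g v - (q (g v) : 𝕂) else 0)‖₊ : ℝ≥0∞) = 0 := by
        intro v hv; rw [if_neg hv]; simp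
      rw [NN, tsum_eq_sum hz]
      calc ∑ v ∈ A, (‖(if v ∈ A then g v - (q (g v) : 𝕂) else 0)‖₊ : ℝ≥0∞)
          ≤ ∑ _v ∈ A, η := by
            refine Finset.sum_le_sum fun v hv => ?_
            rw [if_pos hv, ← enorm_eq_nnnorm, ← ofReal_norm]
            calc ENNReal.ofReal ‖g v - (q (g v) : 𝕂)‖
                ≤ ENNReal.ofReal η.toReal := ENNReal.ofReal_le_ofReal (hq (g v)).le
              _ = η := ENNReal.ofReal_toReal hηtop
        _ = (A.card : ℝ≥0∞) * η := by rw [Finset.sum_const, nsmul_eq_mul]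
        _ ≤ ((A.card : ℝ≥0∞) + 1) * η := mul_le_mul_left le_self_add η
        _ ≤ δ' / 2 := by rw [hη]; exact ENNReal.mul_div_le
    have h2 : NN (fun v => if v ∈ A then (0 : 𝕂) else g v) < δ' / 2 := by
      have hpt : ∀ v, (‖(if v ∈ A then (0 : 𝕂) else g v)‖₊ : ℝ≥0∞)
          = Set.indicator {v : V | v ∉ A} (fun v => (‖g v‖₊ : ℝ≥0∞)) v := by
        intro v
        rw [Set.indicator_apply]
        by_cases h : v ∈ A
        · rw [if_pos h, if_neg (by simpa using h)]
          simp
        · rw [if_neg h, if_pos (by simpa using h)]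
      have hts := tsum_subtype {v : V | v ∉ A} (fun v => (‖g v‖₊ : ℝ≥0∞))
      rw [NN, tsum_congr hpt, ← hts]
      exact hAtail
    calc NN ((fun v => if v ∈ A then g v - (q (g v) : 𝕂) else 0)
          + fun v => if v ∈ A then (0 : 𝕂) else g v)
        ≤ NN (fun v => if v ∈ A then g v - (q (g v) : 𝕂) else 0)
          + NN (fun v => if v ∈ A then (0 : 𝕂) else g v) := NN_add_le _ _
      _ < δ' / 2 + δ' / 2 :=
          ENNReal.add_lt_add_of_le_of_lt (ne_top_of_le_ne_top hhalftop h1) h1 h2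
      _ = δ' := ENNReal.add_halves δ'
      _ ≤ δ := min_le_left _ _

end Stmt15Aux
namespace Stmt15Aux
open DirTree
open scoped Classical
variable {V : Type*} {𝕂 : Type*} [RCLike 𝕂]

theorem norm_coe_lt_one {c : 𝕂} (hc : 1 < ‖c‖) : ((‖c‖₊ : ℝ≥0∞))⁻¹ < 1 := by
  rw [ENNReal.inv_lt_one]
  have h1 : (1 : NNReal) < ‖c‖₊ := by
    rw [← NNReal.coe_lt_coe]
    simpa [coe_nnnorm] using hc
  exact_mod_cast h1

theorem NN_finsupp_ne_top {f : V → 𝕂} {s : Finset V} (hs : ∀ v ∉ s, f v = 0) :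
    NN f ≠ ∞ := by
  rw [NN, tsum_eq_sum (s := s) (fun v hv => by rw [hs v hv]; simp)]
  exact (ENNReal.sum_lt_top.mpr fun v _ => ENNReal.coe_lt_top).ne

theorem hyp_NN [Countable V] (t : DirTree V) (hroot : t.Rooted) (hleafless : t.Leafless)
    (c : 𝕂) (hc : 1 < ‖c‖) :
    ∃ f : V → 𝕂, NN f ≠ ∞ ∧ ∀ g, NN g ≠ ∞ → ∀ ε : ℝ≥0∞, 0 < ε →
      ∃ n : ℕ, NN ((t.bshift fun _ => c)^[n] f - g) < ε := by
  have hc0 : c ≠ 0 := by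
    intro h; rw [h, norm_zero] at hc; linarith
  set T := t.bshift (fun _ => c) with hT
  set r : ℝ≥0∞ := ((‖c‖₊ : ℝ≥0∞))⁻¹ with hr
  have hrlt : r < 1 := norm_coe_lt_one hc
  choose σ hσ using hleafless
  choose Dm hDm using exists_depth t hroot
  obtain ⟨e, hefin, hedense⟩ := exists_enum V 𝕂
  set d : ℕ → V → 𝕂 := fun j => e (Nat.unpair j).1 with hd
  set bexp : ℕ → ℕ := fun j => (Nat.unpair j).2 with hbexp
  set β : ℕ → ℝ≥0∞ := fun j => (2⁻¹ : ℝ≥0∞) ^ bexp j with hβ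
  have hβpos : ∀ j, 0 < β j := fun j => ENNReal.pow_pos (by norm_num) _
  have hβle : ∀ j, β j ≤ 1 := fun j => pow_le_one₀ zero_le (by norm_num)
  have hβtop : ∀ j, β j ≠ ∞ := fun j => ne_top_of_le_ne_top ENNReal.one_ne_top (hβle j)
  have hNd : ∀ j, NN (d j) ≠ ∞ := by
    intro j
    obtain ⟨s, hs⟩ := hefin (Nat.unpair j).1
    exact NN_finsupp_ne_top hs
  have hSDex : ∀ j, ∃ N, ∀ u, d j u ≠ 0 → ∀ k, N ≤ k → parIter t.par k u = none := by
    intro j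
    obtain ⟨s, hs⟩ := hefin (Nat.unpair j).1
    refine ⟨s.sup Dm + 1, fun u hu k hk => ?_⟩
    have hus : u ∈ s := by by_contra h; exact hu (hs u h)
    exact hDm u k (by have := Finset.le_sup (f := Dm) hus; omega)
  choose SD hSD using hSDex
  set Mβ : ℕ → ℕ := fun j => (Finset.range j).sup bexp with hMβ
  set γ : ℕ → ℝ≥0∞ := fun j => min ((2⁻¹ : ℝ≥0∞) ^ j) ((2⁻¹ : ℝ≥0∞) ^ (j + 2 + Mβ j)) with hγdef
  have hγpos : ∀ j, 0 < γ j := fun j => lt_min (ENNReal.pow_pos (by norm_num) _) (ENNReal.pow_pos (by norm_num) _)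
  choose K hK using fun j => exists_pow_mul_le hrlt (hNd j) (hγpos j)
  set n : ℕ → ℕ := fun j => Nat.rec (K 0)
    (fun j' prev => prev + 1 + (Finset.range (j' + 1)).sup SD + K (j' + 1)) j with hn
  have hnsucc : ∀ j, n (j + 1) = n j + 1 + (Finset.range (j + 1)).sup SD + K (j + 1) :=
    fun j => rfl
  have hmono : Monotone n := monotone_nat_of_le_succ fun j => by rw [hnsucc j]; omega
  have hnK : ∀ j, K j ≤ n j := by
    intro j
    cases j with
    | zero => exact le_refl _
    | succ j => rw [hnsucc j]; omega
  have hnKgap : ∀ i j, i < j → K j ≤ n j - n i := by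
    intro i j hij
    obtain ⟨j', rfl⟩ : ∃ j', j = j' + 1 := ⟨j - 1, by omega⟩
    have h1 : n i ≤ n j' := hmono (show i ≤ j' from by omega)
    rw [hnsucc j']
    omega
  have hSDgap : ∀ i j, i < j → SD i ≤ n j - n i := by
    intro i j hij
    have h1 : n (i + 1) ≤ n j := hmono (show i + 1 ≤ j from hij)
    have h2 : SD i ≤ (Finset.range (i + 1)).sup SD :=
      Finset.le_sup (Finset.self_mem_range_succ i)
    rw [hnsucc i] at h1
    omega
  have hP2 : ∀ j, r ^ n j * NN (d j) ≤ (2⁻¹ : ℝ≥0∞) ^ j :=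
    fun j => le_trans (hK j (n j) (hnK j)) (min_le_left _ _)
  have hP3 : ∀ i j, i < j → r ^ (n j - n i) * NN (d j) ≤ (2⁻¹ : ℝ≥0∞) ^ (j + 2) * β i := by
    intro i j hij
    refine le_trans (hK j (n j - n i) (hnKgap i j hij)) (le_trans (min_le_right _ _) ?_)
    rw [pow_add]
    refine mul_le_mul_right ?_ _
    rw [hβ]
    exact pow_le_pow_of_le_one zero_le (by norm_num)
      (Finset.le_sup (f := bexp) (Finset.mem_range.mpr hij))
  have hP4 : ∀ i j, i < j → ∀ u, d i u ≠ 0 → parIter t.par (n j - n i) u = none :=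
    fun i j hij u hu => hSD i u hu _ (hSDgap i j hij)
  -- the candidate hypercyclic vector
  set F : ℕ → V → 𝕂 := fun j => (fsh t σ c)^[n j] (d j) with hF
  have hNF : ∀ j, NN (F j) ≤ r ^ n j * NN (d j) := fun j => NN_fsh_iter_le t σ c hc0 (n j) (d j)
  have hFB : ∑' j, NN (F j) ≤ 2 := by
    calc ∑' j, NN (F j) ≤ ∑' j, (2⁻¹ : ℝ≥0∞) ^ j :=
          ENNReal.tsum_le_tsum fun j => le_trans (hNF j) (hP2 j)
      _ = 2 := by rw [ENNReal.tsum_geometric, ENNReal.one_sub_inv_two, inv_inv]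
  have hFBne : ∑' j, NN (F j) ≠ ∞ := ne_top_of_le_ne_top (by norm_num) hFB
  set f : V → 𝕂 := fun v => ∑' j, F j v with hf
  have hNf : NN f ≠ ∞ := ne_top_of_le_ne_top hFBne (NN_ptsum_le F)
  -- analysis of the iterates
  have key : ∀ j, NN (T^[n j] f - d j) ≤ 2⁻¹ * β j := by
    intro j
    have hiter : T^[n j] f = fun v => ∑' i, T^[n j] (F i) v :=
      funext fun v => iter_tsum t c F hFBne (n j) v
    set G : ℕ → V → 𝕂 := fun i => T^[n j] (F i) with hG
    have hGj : G j = d j := bshift_fsh_iter t σ hσ c hc0 (n j) (d j)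
    have hGlt : ∀ i, i < j → G i = 0 := by
      intro i hij
      have h1 : n j - n i + n i = n j := by have := hmono hij.le; omega
      have h2 : T^[n j] (F i) = T^[n j - n i] (T^[n i] ((fsh t σ c)^[n i] (d i))) := by
        rw [← Function.iterate_add_apply, h1]
      rw [hG]
      show T^[n j] (F i) = 0
      rw [h2, bshift_fsh_iter t σ hσ c hc0]
      exact NN_iter_indicator_le t c (hNd i) (n j - n i) (hP4 i j hij)
    have hGgt : ∀ i, j < i → G i = (fsh t σ c)^[n i - n j] (d i) := by
      intro i hij
      have h1 : n j + (n i - n j) = n i := by have := hmono hij.le; omega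
      have h2 : F i = (fsh t σ c)^[n j] ((fsh t σ c)^[n i - n j] (d i)) := by
        rw [hF]
        show (fsh t σ c)^[n i] (d i) = _
        rw [← Function.iterate_add_apply, h1]
      rw [hG]
      show T^[n j] (F i) = _
      rw [h2, bshift_fsh_iter t σ hσ c hc0]
    have hGb : ∀ i, NN (G i) ≤ (if i = j then NN (d j) else (2⁻¹ : ℝ≥0∞) ^ (i + 2) * β j) := by
      intro i
      rcases lt_trichotomy i j with h | h | h
      · rw [if_neg h.ne, hGlt i h]
        simp [NN]
      · subst h; rw [if_pos rfl, hGj]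
      · rw [if_neg h.ne', hGgt i h]
        exact le_trans (NN_fsh_iter_le t σ c hc0 _ _) (hP3 j i h)
    have hBG : ∑' i, NN (G i) ≠ ∞ := by
      refine ne_top_of_le_ne_top ?_ (ENNReal.tsum_le_tsum hGb)
      have hsplit : ∀ i, (if i = j then NN (d j) else (2⁻¹ : ℝ≥0∞) ^ (i + 2) * β j)
          ≤ (if i = j then NN (d j) else 0) + (2⁻¹ : ℝ≥0∞) ^ (i + 2) * β j := by
        intro i
        by_cases h : i = j <;> simp [h]
      refine ne_top_of_le_ne_top ?_ (ENNReal.tsum_le_tsum hsplit)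
      rw [ENNReal.tsum_add]
      refine ENNReal.add_ne_top.mpr ⟨?_, ?_⟩
      · rw [tsum_eq_single j (fun i hi => if_neg hi)]
        rw [if_pos rfl]
        exact hNd j
      · rw [ENNReal.tsum_mul_right, geom_tail]
        exact ENNReal.mul_ne_top (by norm_num) (hβtop j)
    have hdiff : T^[n j] f - d j = (fun v => ∑' i, G i v) - G j := by rw [hiter, hGj]
    rw [hdiff]
    refine le_trans (NN_tsum_sub G hBG j) ?_
    have hptb : ∀ i, (if i = j then 0 else NN (G i)) ≤ (2⁻¹ : ℝ≥0∞) ^ (i + 2) * β j := by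
      intro i
      rcases lt_trichotomy i j with h | h | h
      · rw [if_neg h.ne, hGlt i h]; simp [NN]
      · subst h; rw [if_pos rfl]; exact zero_le
      · rw [if_neg h.ne']
        have := hGb i
        rw [if_neg h.ne'] at this
        exact this
    calc ∑' i, (if i = j then 0 else NN (G i))
        ≤ ∑' i, (2⁻¹ : ℝ≥0∞) ^ (i + 2) * β j := ENNReal.tsum_le_tsum hptb
      _ = 2⁻¹ * β j := by rw [ENNReal.tsum_mul_right, geom_tail]
  refine ⟨f, hNf, ?_⟩
  intro g hg ε hε
  by_cases hεtop : ε = ∞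
  · refine ⟨0, ?_⟩
    rw [hεtop]
    refine lt_of_le_of_lt (NN_sub_le _ _) ?_
    rw [lt_top_iff_ne_top]
    refine ENNReal.add_ne_top.mpr ⟨?_, hg⟩
    exact ne_top_of_le_ne_top (ENNReal.mul_ne_top (ENNReal.pow_ne_top ENNReal.coe_ne_top) hNf)
      (NN_iter_le t c 0 f)
  · have hε2 : 0 < ε / 2 := ENNReal.div_pos hε.ne' ENNReal.ofNat_ne_top
    obtain ⟨k, hk⟩ := hedense g hg (ε / 2) hε2
    obtain ⟨m, hm⟩ := ENNReal.exists_inv_two_pow_lt hε2.ne'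
    set j := Nat.pair k m with hj
    have hdj : d j = e k := by rw [hd]; simp [hj, Nat.unpair_pair]
    have hβj : β j = (2⁻¹ : ℝ≥0∞) ^ m := by rw [hβ, hbexp]; simp [hj, Nat.unpair_pair]
    refine ⟨n j, ?_⟩
    have htri : T^[n j] f - g = (T^[n j] f - d j) + (d j - g) := by
      funext v; simp only [Pi.sub_apply, Pi.add_apply]; ring
    rw [htri]
    calc NN ((T^[n j] f - d j) + (d j - g))
        ≤ NN (T^[n j] f - d j) + NN (d j - g) := NN_add_le _ _
      _ < ε / 2 + ε / 2 := by
          refine ENNReal.add_lt_add ?_ ?_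
          · refine lt_of_le_of_lt (key j) ?_
            rw [hβj]
            refine lt_of_le_of_lt ?_ hm
            exact mul_le_of_le_one_left zero_le (by norm_num)
          · rw [NN_sub_rev, hdj]
            exact hk
      _ = ε := ENNReal.add_halves ε

end Stmt15Aux
namespace Stmt15Aux
open DirTree
open scoped Classical
variable {V : Type*} {𝕂 : Type*} [RCLike 𝕂]

theorem exists_trunc {f : V → 𝕂} (hf : NN f ≠ ∞) {δ : ℝ≥0∞} (hδ : 0 < δ) :
    ∃ s : Finset V, NN (f - fun v => if v ∈ s then f v else 0) < δ := by
  have htail := ENNReal.tendsto_tsum_compl_atTop_zero (f := fun v => (‖f v‖₊ : ℝ≥0∞)) hf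
  obtain ⟨A, hA⟩ := Filter.eventually_atTop.mp (htail.eventually_lt_const hδ)
  have hAtail : ∑' (x : {v // v ∉ A}), (‖f (x : V)‖₊ : ℝ≥0∞) < δ := hA A le_rfl
  refine ⟨A, ?_⟩
  have hpt : ∀ v, (‖(f - fun v => if v ∈ A then f v else 0) v‖₊ : ℝ≥0∞)
      = Set.indicator {v : V | v ∉ A} (fun v => (‖f v‖₊ : ℝ≥0∞)) v := by
    intro v
    rw [Set.indicator_apply]
    simp only [Pi.sub_apply]
    by_cases h : v ∈ A
    · rw [if_pos h, if_neg (by simpa using h)]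
      simp
    · rw [if_neg h, if_pos (by simpa using h)]
      simp
  have hts := tsum_subtype {v : V | v ∉ A} (fun v => (‖f v‖₊ : ℝ≥0∞))
  rw [NN, tsum_congr hpt, ← hts]
  exact hAtail

theorem mix_NN [Countable V] (t : DirTree V) (hroot : t.Rooted) (hleafless : t.Leafless)
    (c : 𝕂) (hc : 1 < ‖c‖) :
    ∀ f g : V → 𝕂, NN f ≠ ∞ → NN g ≠ ∞ → ∀ ε : ℝ≥0∞, 0 < ε →
      ∃ N : ℕ, ∀ n ≥ N, ∃ h : V → 𝕂, NN h ≠ ∞ ∧ NN (h - f) < ε ∧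
        NN ((t.bshift fun _ => c)^[n] h - g) < ε := by
  have hc0 : c ≠ 0 := fun h => by rw [h, norm_zero] at hc; linarith
  set r : ℝ≥0∞ := ((‖c‖₊ : ℝ≥0∞))⁻¹ with hr
  have hrlt : r < 1 := norm_coe_lt_one hc
  choose σ hσ using hleafless
  choose Dm hDm using exists_depth t hroot
  intro f g hf hg ε hε
  by_cases hεtop : ε = ∞
  · refine ⟨0, fun n _ => ⟨f, hf, ?_, ?_⟩⟩
    · rw [hεtop, sub_self]
      simp [NN]
    · rw [hεtop]
      refine lt_of_le_of_lt (NN_sub_le _ _) ?_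
      rw [lt_top_iff_ne_top]
      exact ENNReal.add_ne_top.mpr
        ⟨ne_top_of_le_ne_top (ENNReal.mul_ne_top (ENNReal.pow_ne_top ENNReal.coe_ne_top) hf)
          (NN_iter_le t c n f), hg⟩
  · have hε2 : 0 < ε / 2 := ENNReal.div_pos hε.ne' ENNReal.ofNat_ne_top
    have hε2top : ε / 2 ≠ ∞ := (ENNReal.div_lt_top hεtop (by norm_num)).ne
    have hε4 : 0 < ε / 2 / 2 := ENNReal.div_pos hε2.ne' ENNReal.ofNat_ne_top
    have hε4top : ε / 2 / 2 ≠ ∞ := (ENNReal.div_lt_top hε2top (by norm_num)).ne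
    obtain ⟨Af, hAf⟩ := exists_trunc hf hε2
    obtain ⟨Ag, hAg⟩ := exists_trunc hg hε2
    set f' : V → 𝕂 := fun v => if v ∈ Af then f v else 0 with hf'
    set g' : V → 𝕂 := fun v => if v ∈ Ag then g v else 0 with hg'
    have hNf' : NN f' ≠ ∞ := NN_finsupp_ne_top (s := Af) (fun v hv => if_neg hv)
    have hNg' : NN g' ≠ ∞ := NN_finsupp_ne_top (s := Ag) (fun v hv => if_neg hv)
    have hN2ex : ∃ N₂, ∀ u, f' u ≠ 0 → ∀ k, N₂ ≤ k → parIter t.par k u = none := by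
      refine ⟨Af.sup Dm + 1, fun u hu k hk => ?_⟩
      have hus : u ∈ Af := by by_contra h; exact hu (if_neg h)
      exact hDm u k (by have := Finset.le_sup (f := Dm) hus; omega)
    obtain ⟨N₂, hN₂⟩ := hN2ex
    obtain ⟨N₁, hN₁⟩ := exists_pow_mul_le hrlt hNg' hε4
    refine ⟨max N₁ N₂, fun n hn => ?_⟩
    set h : V → 𝕂 := f' + (fsh t σ c)^[n] g' with hh
    have hNSg : NN ((fsh t σ c)^[n] g') ≤ r ^ n * NN g' := NN_fsh_iter_le t σ c hc0 n g'
    have hSg4 : NN ((fsh t σ c)^[n] g') ≤ ε / 2 / 2 :=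
      le_trans hNSg (hN₁ n (le_trans (le_max_left _ _) hn))
    have hNSgne : NN ((fsh t σ c)^[n] g') ≠ ∞ := ne_top_of_le_ne_top hε4top hSg4
    refine ⟨h, ?_, ?_, ?_⟩
    · exact ne_top_of_le_ne_top (ENNReal.add_ne_top.mpr ⟨hNf', hNSgne⟩) (NN_add_le _ _)
    · have hdec : h - f = (f' - f) + (fsh t σ c)^[n] g' := by
        funext v; simp only [Pi.sub_apply, Pi.add_apply, hh]; ring
      rw [hdec]
      calc NN ((f' - f) + (fsh t σ c)^[n] g')
          ≤ NN (f' - f) + NN ((fsh t σ c)^[n] g') := NN_add_le _ _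
        _ < ε / 2 + ε / 2 := by
            refine ENNReal.add_lt_add ?_ ?_
            · rw [NN_sub_rev]; exact hAf
            · exact lt_of_le_of_lt hSg4 (ENNReal.half_lt_self hε2.ne' hε2top)
        _ = ε := ENNReal.add_halves ε
    · have hTh : (t.bshift fun _ => c)^[n] h
          = (t.bshift fun _ => c)^[n] f' + (t.bshift fun _ => c)^[n] ((fsh t σ c)^[n] g') :=
        iter_add t c n hNf' hNSgne
      have hTf' : (t.bshift fun _ => c)^[n] f' = 0 :=
        NN_iter_indicator_le t c hNf' n (fun u hu => hN₂ u hu n (le_trans (le_max_right _ _) hn))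
      have hTS : (t.bshift fun _ => c)^[n] ((fsh t σ c)^[n] g') = g' :=
        bshift_fsh_iter t σ hσ c hc0 n g'
      rw [hTh, hTf', hTS, zero_add]
      calc NN (g' - g) = NN (g - g') := NN_sub_rev _ _
        _ < ε / 2 := hAg
        _ < ε := ENNReal.half_lt_self hε.ne' hεtop

end Stmt15Aux

/-- for a rooted leafless directed tree, the Rolewicz operator `λB` is a
bounded hypercyclic operator on `ℓ¹(V)` iff `|λ| > 1`, and in that case it is mixing. -/
theorem stmt15 {V : Type*} [Countable V] {𝕂 : Type*} [RCLike 𝕂] (t : DirTree V)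
    (hroot : t.Rooted) (hleafless : t.Leafless) (c : 𝕂) (hc : c ≠ 0) :
    ((BoundedOn (t.bshift (fun _ => c)) (enormW (fun _ => (1 : 𝕂)) 1) ∧
        HypercyclicOn (t.bshift (fun _ => c)) (MemWLp (fun _ => (1 : 𝕂)) 1)
          (enormW (fun _ => (1 : 𝕂)) 1)) ↔ 1 < ‖c‖) ∧
    (1 < ‖c‖ →
      MixingOn (t.bshift (fun _ => c)) (MemWLp (fun _ => (1 : 𝕂)) 1)
        (enormW (fun _ => (1 : 𝕂)) 1)) := by
  classical
  open Stmt15Aux in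
  constructor
  · constructor
    · rintro ⟨-, hhyp⟩
      by_contra hle
      push_neg at hle
      obtain ⟨f, hfmem, hf⟩ := hhyp
      rw [Stmt15Aux.memWLp_iff] at hfmem
      obtain ⟨root, hroot'⟩ := hroot
      set Mr : NNReal := (Stmt15Aux.NN f).toNNReal + 2 with hMr
      set g : V → 𝕂 := fun v => if v = root then ((Mr : ℝ) : 𝕂) else 0 with hgdef
      have hgmem : Stmt15Aux.NN g ≠ ∞ :=
        Stmt15Aux.NN_finsupp_ne_top (s := {root}) (fun v hv => if_neg (by simpa using hv))
      obtain ⟨n, hn⟩ := hf g ((Stmt15Aux.memWLp_iff g).mpr hgmem) 1 zero_lt_one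
      rw [Stmt15Aux.enormW_one_eq] at hn
      have hNg : Stmt15Aux.NN g = (Mr : ℝ≥0∞) := by
        rw [Stmt15Aux.NN, tsum_eq_single root (fun v hv => by rw [hgdef]; simp [if_neg hv])]
        have hgr : g root = ((Mr : ℝ) : 𝕂) := by rw [hgdef]; simp
        rw [hgr, ← enorm_eq_nnnorm, ← ofReal_norm, RCLike.norm_ofReal, abs_of_nonneg Mr.coe_nonneg,
          ENNReal.ofReal_coe_nnreal]
      have hcle : ((‖c‖₊ : ℝ≥0∞)) ≤ 1 := by
        have h1 : ‖c‖₊ ≤ 1 := by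
          rw [← NNReal.coe_le_coe]
          simpa [coe_nnnorm] using hle
        exact_mod_cast h1
      have hb1 : Stmt15Aux.NN ((t.bshift fun _ => c)^[n] f) ≤ Stmt15Aux.NN f := by
        refine le_trans (Stmt15Aux.NN_iter_le t c n f) ?_
        exact mul_le_of_le_one_left zero_le (pow_le_one₀ zero_le hcle)
      have hchain : (Mr : ℝ≥0∞) ≤ 1 + Stmt15Aux.NN f := by
        calc (Mr : ℝ≥0∞) = Stmt15Aux.NN g := hNg.symm
          _ ≤ Stmt15Aux.NN (g - (t.bshift fun _ => c)^[n] f)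
              + Stmt15Aux.NN ((t.bshift fun _ => c)^[n] f) := Stmt15Aux.NN_le_sub_add _ _
          _ = Stmt15Aux.NN ((t.bshift fun _ => c)^[n] f - g)
              + Stmt15Aux.NN ((t.bshift fun _ => c)^[n] f) := by rw [Stmt15Aux.NN_sub_rev]
          _ ≤ 1 + Stmt15Aux.NN f := add_le_add hn.le hb1
      have hMreq : (Mr : ℝ≥0∞) = Stmt15Aux.NN f + 2 := by
        rw [hMr]
        push_cast
        rw [ENNReal.coe_toNNReal hfmem]
      rw [hMreq, add_comm 1 (Stmt15Aux.NN f)] at hchain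
      have h21 : (2 : ℝ≥0∞) ≤ 1 := (ENNReal.add_le_add_iff_left hfmem).mp hchain
      norm_num at h21
    · intro hc1
      constructor
      · refine ⟨(‖c‖₊ : ℝ≥0∞), ENNReal.coe_ne_top, fun f => ?_⟩
        rw [Stmt15Aux.enormW_one_eq, Stmt15Aux.enormW_one_eq]
        exact Stmt15Aux.NN_bshift_le t c f
      · obtain ⟨f, hf1, hf2⟩ := Stmt15Aux.hyp_NN t hroot hleafless c hc1
        refine ⟨f, (Stmt15Aux.memWLp_iff f).mpr hf1, fun g hgmem ε hε => ?_⟩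
        rw [Stmt15Aux.memWLp_iff] at hgmem
        obtain ⟨n, hn⟩ := hf2 g hgmem ε hε
        exact ⟨n, by rw [Stmt15Aux.enormW_one_eq]; exact hn⟩
  · intro hc1 f g hfmem hgmem ε hε
    rw [Stmt15Aux.memWLp_iff] at hfmem hgmem
    obtain ⟨N, hN⟩ := Stmt15Aux.mix_NN t hroot hleafless c hc1 f g hfmem hgmem ε hε
    refine ⟨N, fun n hn => ?_⟩
    obtain ⟨h, h1, h2, h3⟩ := hN n hn
    exact ⟨h, (Stmt15Aux.memWLp_iff h).mpr h1,
      by rw [Stmt15Aux.enormW_one_eq]; exact h2,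
      by rw [Stmt15Aux.enormW_one_eq]; exact h3⟩
end

section
/- Let (V,E) be an unrooted leafless directed tree with a free left end, λ ∈ 𝕂 nonzero, X = ℓ^p(V) with 1 < p < ∞, and suppose λB is bounded on X. If |λ| ≥ 1 then λB is not hypercyclic on X. -/
open scoped ENNReal
open Filter

/-- The unrooted directed tree has a free left end: some vertex `v` is alone in its
generation together with all of its ancestors, i.e. `Chi^n(par^n(v)) = {v}` for all `n`
and the generation of each ancestor is a singleton. -/
def DirTree.FreeLeftEnd {V : Type*} (t : DirTree V) : Prop :=
  ∃ v : V, ∀ (k m : ℕ) (u : V),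
    parIter t.par m u = parIter t.par (m + k) v → some u = parIter t.par k v

/-- on an unrooted leafless directed tree with a free left end, if
`|λ| ≥ 1` then the Rolewicz operator `λB` (bounded on `ℓ^p(V)`, `1 < p < ∞`) is not
hypercyclic. -/
theorem stmt18 {V : Type*} [Countable V] {𝕂 : Type*} [RCLike 𝕂] (t : DirTree V)
    (hur : t.Unrooted) (hleafless : t.Leafless) (hfle : t.FreeLeftEnd)
    (c : 𝕂) (hc : 1 ≤ ‖c‖)
    (p : ℝ≥0∞) (hp : 1 < p) (hp' : p ≠ ∞)
    (hbd : BoundedOn (t.bshift (fun _ => c)) (enormW (fun _ => (1 : 𝕂)) p)) :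
    ¬ HypercyclicOn (t.bshift (fun _ => c)) (MemWLp (fun _ => (1 : 𝕂)) p)
        (enormW (fun _ => (1 : 𝕂)) p) := by
  classical
  intro H
  obtain ⟨v, hv⟩ := hfle
  have hne : ∀ w : V, (t.par w).isSome := fun w => Option.ne_none_iff_isSome.mp (hur w)
  set nxt : V → V := fun w => (t.par w).get (hne w) with hnxt
  set a : ℕ → V := fun n => nxt^[n] v with hadef
  have ha0 : a 0 = v := rfl
  have ha : ∀ k, t.par (a k) = some (a (k + 1)) := by
    intro k
    have h1 : a (k + 1) = nxt (a k) := Function.iterate_succ_apply' nxt k v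
    rw [h1]
    exact (Option.some_get (hne (a k))).symm
  have hpi : ∀ n m, parIter t.par n (a m) = some (a (m + n)) := by
    intro n
    induction n with
    | zero => intro m; rfl
    | succ k ih =>
      intro m
      show (t.par (a m)).bind (parIter t.par k) = _
      rw [ha m]
      show parIter t.par k (a (m + 1)) = _
      rw [ih (m + 1)]
      have : m + 1 + k = m + (k + 1) := by omega
      rw [this]
  have hone : ∀ u : V, parIter t.par 1 u = t.par u := by
    intro u
    show (t.par u).bind (parIter t.par 0) = t.par u
    cases t.par u <;> rfl
  have hchild : ∀ j : ℕ, t.children (a (j + 1)) = {a j} := by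
    intro j
    ext u
    simp only [DirTree.children, Set.mem_setOf_eq, Set.mem_singleton_iff]
    constructor
    · intro h
      have h2 := hpi (1 + j) 0
      rw [ha0, Nat.zero_add] at h2
      have e : 1 + j = j + 1 := by omega
      have h1 : parIter t.par 1 u = parIter t.par (1 + j) v := by
        rw [hone, h, h2, e]
      have h3 := hv j 1 u h1
      have h4 := hpi j 0
      rw [ha0, Nat.zero_add] at h4
      rw [h4] at h3
      exact Option.some_inj.mp h3
    · intro h; rw [h]; exact ha j
  have hav : ∀ d : ℕ, 0 < d → a d ≠ v := by
    intro d hd h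
    obtain ⟨e, rfl⟩ : ∃ e, d = e + 1 := ⟨d - 1, by omega⟩
    apply t.acyclic v e
    have h2 := hpi (e + 1) 0
    rw [ha0, Nat.zero_add] at h2
    rw [h2, h]
  set T : (V → 𝕂) → (V → 𝕂) := t.bshift (fun _ => c) with hT
  have hb : ∀ (h : V → 𝕂) (j : ℕ), T h (a (j + 1)) = c * h (a j) := by
    intro h j
    show ∑' u : t.children (a (j + 1)), c * h u = _
    rw [hchild j]
    exact tsum_singleton (a j) (fun u => c * h u)
  have hiter : ∀ (n : ℕ) (h : V → 𝕂) (m : ℕ), T^[n] h (a (m + n)) = c ^ n * h (a m) := by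
    intro n
    induction n with
    | zero => intro h m; simp
    | succ k ih =>
      intro h m
      have h1 : m + (k + 1) = (m + k) + 1 := by omega
      rw [Function.iterate_succ_apply' T k h, h1, hb (T^[k] h) (m + k), ih h m, pow_succ]
      ring
  have hpne : p ≠ 0 := (zero_lt_one.trans hp).ne'
  have hpt : 0 < p.toReal := ENNReal.toReal_pos hpne hp'
  have hcoord : ∀ (F : V → 𝕂) (w : V), (‖F w‖₊ : ℝ≥0∞) ≤ enormW (fun _ => (1 : 𝕂)) p F := by
    intro F w
    rw [enormW, if_neg hp']
    have h1 : (‖F w‖₊ : ℝ≥0∞) = (((‖(1 : 𝕂) * F w‖₊ : ℝ≥0∞)) ^ p.toReal) ^ (1 / p.toReal) := by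
      rw [one_mul, ← ENNReal.rpow_mul, mul_one_div_cancel hpt.ne', ENNReal.rpow_one]
    rw [h1]
    exact ENNReal.rpow_le_rpow (ENNReal.le_tsum w) (by positivity)
  have hmem : ∀ b : 𝕂, MemWLp (fun _ => (1 : 𝕂)) p (fun u => if u = v then b else 0) := by
    intro b
    rw [MemWLp, enormW, if_neg hp']
    have hts : (∑' u, (‖(1 : 𝕂) * (if u = v then b else 0)‖₊ : ℝ≥0∞) ^ p.toReal)
        = (‖b‖₊ : ℝ≥0∞) ^ p.toReal := by
      rw [tsum_eq_single v]
      · rw [if_pos rfl, one_mul]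
      · intro u hu
        rw [if_neg hu, mul_zero, nnnorm_zero, ENNReal.coe_zero, ENNReal.zero_rpow_of_pos hpt]
    rw [hts]
    exact ENNReal.rpow_ne_top_of_nonneg (by positivity)
      (ENNReal.rpow_ne_top_of_nonneg hpt.le ENNReal.coe_ne_top)
  obtain ⟨f, _, hdense⟩ := H
  have hεpos : (0 : ℝ≥0∞) < ENNReal.ofReal (1 / 3) := ENNReal.ofReal_pos.mpr (by norm_num)
  obtain ⟨n₁, h1⟩ := hdense _ (hmem 1) _ hεpos
  obtain ⟨n₂, h2⟩ := hdense _ (hmem 2) _ hεpos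
  have hsmall : ∀ (F : V → 𝕂), enormW (fun _ => (1 : 𝕂)) p F < ENNReal.ofReal (1 / 3) →
      ∀ w, ‖F w‖ < 1 / 3 := by
    intro F hF w
    have h3 := lt_of_le_of_lt (hcoord F w) hF
    rw [← ENNReal.ofReal_coe_nnreal, coe_nnnorm] at h3
    exact (ENNReal.ofReal_lt_ofReal_iff (by norm_num)).mp h3
  have e1 : ∀ w, ‖T^[n₁] f w - (if w = v then (1 : 𝕂) else 0)‖ < 1 / 3 := by
    intro w
    have h := hsmall _ h1 w
    simp only [Pi.sub_apply] at h
    exact h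
  have e2 : ∀ w, ‖T^[n₂] f w - (if w = v then (2 : 𝕂) else 0)‖ < 1 / 3 := by
    intro w
    have h := hsmall _ h2 w
    simp only [Pi.sub_apply] at h
    exact h
  have e1v : ‖T^[n₁] f v - 1‖ < 1 / 3 := by have h := e1 v; rwa [if_pos rfl] at h
  have e2v : ‖T^[n₂] f v - 2‖ < 1 / 3 := by have h := e2 v; rwa [if_pos rfl] at h
  have hlow1 : 2 / 3 < ‖T^[n₁] f v‖ := by
    have h2 := norm_sub_norm_le (1 : 𝕂) (T^[n₁] f v)
    rw [norm_sub_rev, norm_one] at h2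
    linarith
  have hlow2 : 5 / 3 < ‖T^[n₂] f v‖ := by
    have hn2 : ‖(2 : 𝕂)‖ = 2 := by simpa using RCLike.norm_ofNat (K := 𝕂) 2
    have h2 := norm_sub_norm_le (2 : 𝕂) (T^[n₂] f v)
    rw [norm_sub_rev, hn2] at h2
    linarith
  have hcnorm : ∀ d : ℕ, (1 : ℝ) ≤ ‖c‖ ^ d := fun d => one_le_pow₀ hc
  rcases lt_trichotomy n₁ n₂ with hlt | heq | hgt
  · set d := n₂ - n₁ with hd
    have hdpos : 0 < d := by omega
    have hkey : T^[n₂] f (a d) = c ^ d * T^[n₁] f v := by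
      have h3 : n₂ = d + n₁ := by omega
      rw [h3, Function.iterate_add_apply T d n₁ f]
      have h4 := hiter d (T^[n₁] f) 0
      rw [ha0, Nat.zero_add] at h4
      exact h4
    have h5 : ‖T^[n₂] f (a d)‖ < 1 / 3 := by
      have h := e2 (a d)
      rwa [if_neg (hav d hdpos), sub_zero] at h
    rw [hkey, norm_mul, norm_pow] at h5
    nlinarith [hcnorm d, norm_nonneg (T^[n₁] f v)]
  · exfalso
    rw [heq] at e1v
    have h3 : ‖(T^[n₂] f v - 1) - (T^[n₂] f v - 2)‖ ≤ ‖T^[n₂] f v - 1‖ + ‖T^[n₂] f v - 2‖ :=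
      norm_sub_le _ _
    have h4 : (T^[n₂] f v - 1) - (T^[n₂] f v - 2) = (1 : 𝕂) := by ring
    rw [h4, norm_one] at h3
    linarith
  · set d := n₁ - n₂ with hd
    have hdpos : 0 < d := by omega
    have hkey : T^[n₁] f (a d) = c ^ d * T^[n₂] f v := by
      have h3 : n₁ = d + n₂ := by omega
      rw [h3, Function.iterate_add_apply T d n₂ f]
      have h4 := hiter d (T^[n₂] f) 0
      rw [ha0, Nat.zero_add] at h4
      exact h4
    have h5 : ‖T^[n₁] f (a d)‖ < 1 / 3 := by
      have h := e1 (a d)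
      rwa [if_neg (hav d hdpos), sub_zero] at h
    rw [hkey, norm_mul, norm_pow] at h5
    nlinarith [hcnorm d, norm_nonneg (T^[n₂] f v)]
end

section
/- Let (V,E) be a rooted, leafless directed tree and λ a weight such that B_λ is a bounded operator on ℓ^p(V), 1 ≤ p < ∞. If B_λ is hypercyclic, then there is an increasing sequence (n_k) of positive integers such that for each v ∈ V, Λ_{v,n_k} := ∑_{u ∈ Chi^{n_k}(v)} |λ(v→u)| → ∞ as k → ∞. -/
open scoped ENNReal
open Filter

section AuxLemmas

open scoped Classical
open scoped NNReal

variable {V : Type*} {𝕂 : Type*} [RCLike 𝕂]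

lemma parIter_zero' (par : V → Option V) (v : V) : parIter par 0 v = some v := rfl

lemma parIter_succ' (par : V → Option V) (n : ℕ) (v : V) :
    parIter par (n + 1) v = (par v).bind (parIter par n) := rfl

lemma enorm_tsum_le' {ι : Type*} (g : ι → 𝕂) :
    (‖∑' i, g i‖₊ : ℝ≥0∞) ≤ ∑' i, (‖g i‖₊ : ℝ≥0∞) := by
  by_cases h : Summable fun i => ‖g i‖₊
  · have h2 : ‖∑' i, g i‖₊ ≤ ∑' i, ‖g i‖₊ := nnnorm_tsum_le h
    calc (‖∑' i, g i‖₊ : ℝ≥0∞) ≤ (((∑' i, ‖g i‖₊ : ℝ≥0)) : ℝ≥0∞) :=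
        ENNReal.coe_le_coe.2 h2
      _ = ∑' i, (‖g i‖₊ : ℝ≥0∞) := ENNReal.coe_tsum h
  · have : ∑' i, (‖g i‖₊ : ℝ≥0∞) = ⊤ := by
      by_contra hne
      exact h (ENNReal.tsum_coe_ne_top_iff_summable.1 hne)
    simp [this]

lemma wprod_succ' (t : DirTree V) (lam : V → 𝕂) (n : ℕ) {w u0 : V} (h : t.par w = some u0) :
    t.wprod lam (n + 1) w = t.wprod lam n u0 * lam w := by
  unfold DirTree.wprod
  rw [Finset.prod_range_succ']
  have h0 : ∀ k, parIter t.par (k + 1) w = parIter t.par k u0 := fun k => by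
    simp [parIter_succ', h]
  simp only [h0, parIter_zero', Option.elim_some]

lemma aux_key (t : DirTree V) (lam : V → 𝕂) (n : ℕ) (f : V → 𝕂) (v : V) :
    (‖(t.bshift lam)^[n] f v‖₊ : ℝ≥0∞) ≤
      ∑' u : V, if parIter t.par n u = some v then
        (‖t.wprod lam n u‖₊ : ℝ≥0∞) * ‖f u‖₊ else 0 := by
  induction n generalizing f with
  | zero =>
    rw [Function.iterate_zero_apply]
    refine le_trans ?_ (ENNReal.le_tsum v)
    simp [parIter_zero', DirTree.wprod]
  | succ n ih =>
    rw [Function.iterate_succ_apply]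
    refine le_trans (ih (t.bshift lam f)) ?_
    have hB : ∀ u : V, (‖t.bshift lam f u‖₊ : ℝ≥0∞) ≤
        ∑' w : V, if t.par w = some u then (‖lam w‖₊ : ℝ≥0∞) * ‖f w‖₊ else 0 := by
      intro u
      refine le_trans (enorm_tsum_le' _) ?_
      rw [tsum_subtype (t.children u) (fun w => (‖lam w * f w‖₊ : ℝ≥0∞))]
      refine ENNReal.tsum_le_tsum fun w => ?_
      by_cases hw : t.par w = some u
      · have hmem : w ∈ t.children u := hw
        simp [Set.indicator_apply, hmem, hw, nnnorm_mul, ENNReal.coe_mul]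
      · have hmem : w ∉ t.children u := hw
        simp [Set.indicator_apply, hmem, hw]
    calc ∑' u : V, (if parIter t.par n u = some v then
            (‖t.wprod lam n u‖₊ : ℝ≥0∞) * ‖t.bshift lam f u‖₊ else 0)
        ≤ ∑' u : V, (if parIter t.par n u = some v then
            (‖t.wprod lam n u‖₊ : ℝ≥0∞) *
              ∑' w : V, (if t.par w = some u then (‖lam w‖₊ : ℝ≥0∞) * ‖f w‖₊ else 0) else 0) := by
          refine ENNReal.tsum_le_tsum fun u => ?_
          by_cases hu : parIter t.par n u = some v
          · simp only [if_pos hu]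
            exact mul_le_mul_right (hB u) _
          · simp [hu]
      _ = ∑' u : V, ∑' w : V, (if parIter t.par n u = some v then
            (‖t.wprod lam n u‖₊ : ℝ≥0∞) *
              (if t.par w = some u then (‖lam w‖₊ : ℝ≥0∞) * ‖f w‖₊ else 0) else 0) := by
          refine tsum_congr fun u => ?_
          by_cases hu : parIter t.par n u = some v
          · simp only [if_pos hu]
            exact ENNReal.tsum_mul_left.symm
          · simp [hu]
      _ = ∑' w : V, ∑' u : V, (if parIter t.par n u = some v then
            (‖t.wprod lam n u‖₊ : ℝ≥0∞) *
              (if t.par w = some u then (‖lam w‖₊ : ℝ≥0∞) * ‖f w‖₊ else 0) else 0) :=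
          ENNReal.tsum_comm
      _ = ∑' w : V, (if parIter t.par (n + 1) w = some v then
            (‖t.wprod lam (n + 1) w‖₊ : ℝ≥0∞) * ‖f w‖₊ else 0) := by
          refine tsum_congr fun w => ?_
          rcases hpw : t.par w with _ | u0
          · have h1 : parIter t.par (n + 1) w = none := by
              simp [parIter_succ', hpw]
            simp [h1]
          · have h1 : parIter t.par (n + 1) w = parIter t.par n u0 := by
              simp [parIter_succ', hpw]
            rw [tsum_eq_single u0 ?_]
            · rw [h1, if_pos rfl, wprod_succ' t lam n hpw, nnnorm_mul, ENNReal.coe_mul]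
              by_cases hu : parIter t.par n u0 = some v
              · rw [if_pos hu, if_pos hu]; ring
              · rw [if_neg hu, if_neg hu]
            · intro u hu
              by_cases h2 : parIter t.par n u = some v
              · rw [if_pos h2,
                  if_neg (fun hc : some u0 = some u =>
                    hu (Option.some_injective _ hc).symm), mul_zero]
              · exact if_neg h2

lemma point_le_enormW (p : ℝ≥0∞) (hp : 1 ≤ p) (hp' : p ≠ ∞) (f : V → 𝕂) (v : V) :
    (‖f v‖₊ : ℝ≥0∞) ≤ enormW (fun _ => (1 : 𝕂)) p f := by
  have hp0 : p ≠ 0 := (lt_of_lt_of_le zero_lt_one hp).ne'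
  have hpt : 0 < p.toReal := ENNReal.toReal_pos hp0 hp'
  rw [enormW, if_neg hp']
  have h1 : (‖f v‖₊ : ℝ≥0∞) ^ p.toReal ≤
      ∑' u, (‖(1 : 𝕂) * f u‖₊ : ℝ≥0∞) ^ p.toReal := by
    refine le_trans (le_of_eq ?_) (ENNReal.le_tsum v)
    rw [one_mul]
  calc (‖f v‖₊ : ℝ≥0∞) = ((‖f v‖₊ : ℝ≥0∞) ^ p.toReal) ^ (1 / p.toReal) := by
        rw [← ENNReal.rpow_mul, mul_one_div, div_self hpt.ne', ENNReal.rpow_one]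
    _ ≤ _ := ENNReal.rpow_le_rpow h1 (by positivity)

lemma memWLp_finsupp (p : ℝ≥0∞) (hp : 1 ≤ p) (hp' : p ≠ ∞) (g : V → 𝕂) (s : Finset V)
    (hs : ∀ v ∉ s, g v = 0) : MemWLp (fun _ => (1 : 𝕂)) p g := by
  have hp0 : p ≠ 0 := (lt_of_lt_of_le zero_lt_one hp).ne'
  have hpt : 0 < p.toReal := ENNReal.toReal_pos hp0 hp'
  rw [MemWLp, enormW, if_neg hp']
  have h1 : ∑' v, (‖(1 : 𝕂) * g v‖₊ : ℝ≥0∞) ^ p.toReal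
      = ∑ v ∈ s, (‖(1 : 𝕂) * g v‖₊ : ℝ≥0∞) ^ p.toReal := by
    refine tsum_eq_sum fun v hv => ?_
    rw [hs v hv, mul_zero, nnnorm_zero, ENNReal.coe_zero, ENNReal.zero_rpow_of_pos hpt]
  rw [h1]
  refine ENNReal.rpow_ne_top_of_nonneg (by positivity) ?_
  refine (ENNReal.sum_lt_top.2 fun v _ => ?_).ne
  exact ENNReal.rpow_lt_top_of_nonneg hpt.le ENNReal.coe_ne_top

end AuxLemmas

/-- for a rooted leafless directed tree and `B_λ` bounded on `ℓ^p(V)`,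
`1 ≤ p < ∞`: if `B_λ` is hypercyclic, then there is an increasing sequence `(n_k)` of
positive integers such that for each `v`,
`Λ_{v,n_k} = ∑_{u ∈ Chi^{n_k}(v)} |λ(v→u)| → ∞`. -/
theorem stmt19 {V : Type*} [Countable V] {𝕂 : Type*} [RCLike 𝕂] (t : DirTree V)
    (hroot : t.Rooted) (hleafless : t.Leafless)
    (lam : V → 𝕂) (hlam : ∀ v, lam v ≠ 0)
    (p : ℝ≥0∞) (hp : 1 ≤ p) (hp' : p ≠ ∞)
    (hbd : BoundedOn (t.bshift lam) (enormW (fun _ => (1 : 𝕂)) p))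
    (hhc : HypercyclicOn (t.bshift lam) (MemWLp (fun _ => (1 : 𝕂)) p)
        (enormW (fun _ => (1 : 𝕂)) p)) :
    ∃ n : ℕ → ℕ, StrictMono n ∧ (∀ k, 0 < n k) ∧ ∀ v : V,
      Filter.Tendsto
        (fun k => ∑' u : t.desc (n k) v, (‖t.wprod lam (n k) u.1‖₊ : ℝ≥0∞))
        Filter.atTop (nhds ⊤) := by
  classical
  obtain ⟨f, hfmem, hforb⟩ := hhc
  obtain ⟨r, hr⟩ := hroot
  have hNE : Nonempty V := ⟨r⟩
  obtain ⟨e, he⟩ := exists_surjective_nat V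
  have hFtop : enormW (fun _ => (1 : 𝕂)) p f ≠ ∞ := hfmem
  -- key bound : the value of an iterate is at most Λ times the norm of f
  have key : ∀ (m : ℕ) (v : V), (‖(t.bshift lam)^[m] f v‖₊ : ℝ≥0∞) ≤
      (∑' u : t.desc m v, (‖t.wprod lam m u.1‖₊ : ℝ≥0∞)) * enormW (fun _ => (1 : 𝕂)) p f := by
    intro m v
    refine le_trans (aux_key t lam m f v) ?_
    have hstep : ∀ u : V, (if parIter t.par m u = some v then
        (‖t.wprod lam m u‖₊ : ℝ≥0∞) * ‖f u‖₊ else 0) ≤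
        (if parIter t.par m u = some v then (‖t.wprod lam m u‖₊ : ℝ≥0∞) else 0) *
          enormW (fun _ => (1 : 𝕂)) p f := by
      intro u
      by_cases hu : parIter t.par m u = some v
      · rw [if_pos hu, if_pos hu]
        exact mul_le_mul_right (point_le_enormW p hp hp' f u) _
      · simp [hu]
    refine le_trans (ENNReal.tsum_le_tsum hstep) ?_
    rw [ENNReal.tsum_mul_right]
    refine mul_le_mul_left (le_of_eq ?_) _
    rw [tsum_subtype (t.desc m v) (fun u => (‖t.wprod lam m u‖₊ : ℝ≥0∞))]
    refine tsum_congr fun u => ?_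
    by_cases hu : parIter t.par m u = some v
    · rw [if_pos hu]
      exact (Set.indicator_of_mem (show u ∈ t.desc m v from hu)
        (fun u => (‖t.wprod lam m u‖₊ : ℝ≥0∞))).symm
    · rw [if_neg hu]
      exact (Set.indicator_of_notMem (show u ∉ t.desc m v from hu)
        (fun u => (‖t.wprod lam m u‖₊ : ℝ≥0∞))).symm
  -- main step: one application of hypercyclicity
  have lemA : ∀ (N M K : ℕ), ∃ mm : ℕ, N < mm ∧ ∀ i ≤ K,
      (M : ℝ≥0∞) ≤ ∑' u : t.desc mm (e i), (‖t.wprod lam mm u.1‖₊ : ℝ≥0∞) := by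
    intro N M K
    set B : ℝ≥0∞ := (Finset.range (N + 1)).sup
      (fun j => (‖(t.bshift lam)^[j] f (e 0)‖₊ : ℝ≥0∞)) with hBdef
    have hBtop : B ≠ ∞ :=
      ((Finset.sup_lt_iff (by simp)).2 (fun j _ => ENNReal.coe_lt_top)).ne
    have hfin : (M : ℝ≥0∞) * enormW (fun _ => (1 : 𝕂)) p f + 1 + B ≠ ∞ :=
      ENNReal.add_ne_top.2 ⟨ENNReal.add_ne_top.2
        ⟨ENNReal.mul_ne_top (ENNReal.natCast_ne_top M) hFtop, ENNReal.one_ne_top⟩, hBtop⟩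
    obtain ⟨M', hM'⟩ := ENNReal.exists_nat_gt hfin
    set g : V → 𝕂 := fun v => if ∃ i, i ≤ K ∧ e i = v then (M' : 𝕂) else 0 with hgdef
    have hgmem : MemWLp (fun _ => (1 : 𝕂)) p g := by
      refine memWLp_finsupp p hp hp' g ((Finset.range (K + 1)).image e) (fun v hv => ?_)
      rw [hgdef]
      refine if_neg (fun ⟨i, hi, hei⟩ => hv ?_)
      exact Finset.mem_image.2 ⟨i, Finset.mem_range.2 (Nat.lt_succ_of_le hi), hei⟩
    obtain ⟨mm, hmm⟩ := hforb g hgmem 1 zero_lt_one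
    have hpw : ∀ v : V, (‖g v‖₊ : ℝ≥0∞) ≤ (‖(t.bshift lam)^[mm] f v‖₊ : ℝ≥0∞) + 1 := by
      intro v
      have h1 : (‖((t.bshift lam)^[mm] f - g) v‖₊ : ℝ≥0∞) ≤
          enormW (fun _ => (1 : 𝕂)) p ((t.bshift lam)^[mm] f - g) :=
        point_le_enormW p hp hp' _ v
      have h2 : ‖g v‖₊ ≤ ‖(t.bshift lam)^[mm] f v‖₊ +
          ‖(t.bshift lam)^[mm] f v - g v‖₊ := by
        simpa [sub_sub_cancel] using
          nnnorm_sub_le ((t.bshift lam)^[mm] f v) ((t.bshift lam)^[mm] f v - g v)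
      have h2' : (‖g v‖₊ : ℝ≥0∞) ≤ (‖(t.bshift lam)^[mm] f v‖₊ : ℝ≥0∞) +
          (‖((t.bshift lam)^[mm] f - g) v‖₊ : ℝ≥0∞) := by
        exact_mod_cast h2
      exact le_trans h2' (add_le_add_right (le_of_lt (lt_of_le_of_lt h1 hmm)) _)
    have hval : ∀ i ≤ K, (M' : ℝ≥0∞) ≤ (‖(t.bshift lam)^[mm] f (e i)‖₊ : ℝ≥0∞) + 1 := by
      intro i hi
      have hgv : g (e i) = (M' : 𝕂) := by rw [hgdef]; exact if_pos ⟨i, hi, rfl⟩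
      have hgn : (‖g (e i)‖₊ : ℝ≥0∞) = (M' : ℝ≥0∞) := by
        rw [hgv, RCLike.nnnorm_natCast, ENNReal.coe_natCast]
      rw [← hgn]
      exact hpw (e i)
    have hone : (1 : ℝ≥0∞) ≤ (M : ℝ≥0∞) * enormW (fun _ => (1 : 𝕂)) p f + 1 + B :=
      le_trans le_add_self le_self_add
    have hNlt : N < mm := by
      by_contra hle
      push_neg at hle
      have h1 : (‖(t.bshift lam)^[mm] f (e 0)‖₊ : ℝ≥0∞) ≤ B :=
        Finset.le_sup (f := fun j => (‖(t.bshift lam)^[j] f (e 0)‖₊ : ℝ≥0∞))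
          (Finset.mem_range.2 (Nat.lt_succ_of_le hle))
      have h2 : (M' : ℝ≥0∞) ≤ B + 1 := le_trans (hval 0 (Nat.zero_le K))
        (add_le_add_left h1 1)
      have h4 : B + 1 ≤ (M : ℝ≥0∞) * enormW (fun _ => (1 : 𝕂)) p f + 1 + B := by
        rw [add_comm B 1]
        exact add_le_add_left le_add_self B
      exact absurd hM' (not_lt.2 (le_trans h2 h4))
    refine ⟨mm, hNlt, fun i hi => ?_⟩
    have h2 := hval i hi
    have h3 := key mm (e i)
    by_cases hF0 : enormW (fun _ => (1 : 𝕂)) p f = 0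
    · exfalso
      have h0 : (‖(t.bshift lam)^[mm] f (e i)‖₊ : ℝ≥0∞) = 0 :=
        le_antisymm (by simpa [hF0] using h3) zero_le
      have hle1 : (M' : ℝ≥0∞) ≤ 1 := by
        rw [h0, zero_add] at h2
        exact h2
      exact absurd (lt_of_le_of_lt hone hM') (not_lt.2 hle1)
    · have h4 : (M : ℝ≥0∞) * enormW (fun _ => (1 : 𝕂)) p f + 1 ≤
          (∑' u : t.desc mm (e i), (‖t.wprod lam mm u.1‖₊ : ℝ≥0∞)) *
            enormW (fun _ => (1 : 𝕂)) p f + 1 := by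
        refine le_trans (le_trans le_self_add hM'.le) (le_trans h2 ?_)
        exact add_le_add_left h3 1
      have h5 := (ENNReal.add_le_add_iff_right ENNReal.one_ne_top).1 h4
      exact (ENNReal.mul_le_mul_iff_left hF0 hFtop).1 h5
  -- recursive construction of the sequence
  choose mfun hm1 hm2 using lemA
  let nseq : ℕ → ℕ := fun k => Nat.rec (mfun 0 1 0) (fun j nj => mfun nj (j + 2) (j + 1)) k
  have hsucc : ∀ k, nseq (k + 1) = mfun (nseq k) (k + 2) (k + 1) := fun k => rfl
  have hmono : StrictMono nseq := strictMono_nat_of_lt_succ (fun k => by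
    rw [hsucc k]; exact hm1 (nseq k) (k + 2) (k + 1))
  have hpos : ∀ k, 0 < nseq k := fun k =>
    lt_of_lt_of_le (hm1 0 1 0) (hmono.monotone (Nat.zero_le k))
  have hgrow : ∀ (k i : ℕ), i ≤ k → ((k : ℕ) : ℝ≥0∞) ≤
      ∑' u : t.desc (nseq k) (e i), (‖t.wprod lam (nseq k) u.1‖₊ : ℝ≥0∞) := by
    intro k i hik
    cases k with
    | zero => simp
    | succ k =>
      refine le_trans ?_ (hm2 (nseq k) (k + 2) (k + 1) i hik)
      exact Nat.cast_le.2 (by omega)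
  refine ⟨nseq, hmono, hpos, fun v => ?_⟩
  obtain ⟨i, rfl⟩ := he v
  rw [ENNReal.tendsto_nhds_top_iff_nat]
  intro K
  filter_upwards [Filter.eventually_ge_atTop (max i (K + 1))] with k hk
  have hKk : K < k := lt_of_lt_of_le (Nat.lt_succ_self K) (le_trans (le_max_right i (K + 1)) hk)
  have h1 : (K : ℝ≥0∞) < (k : ℝ≥0∞) := by exact_mod_cast hKk
  exact lt_of_lt_of_le h1 (hgrow k i (le_trans (le_max_left i (K + 1)) hk))
end
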